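/- Let P̃ be an affine poset of order n and T a maximal n-periodic proper tubing of P̃. If σ ∈ T is a tube with |σ| = n, then the intersection of H_τ over all τ ∈ T with τ ⊆ σ equals the intersection of H_τ over all τ ∈ T, and this intersection is a single point in ℝ^{P̃}/𝒞. -/

import Mathlib

/-- An affine poset of order `n`: a partial order `⪯` on `ℤ` with `i ⪯ i + n`,
which is `n`-periodic and strongly connected. -/
structure AffinePoset (n : ℕ) where
  le : ℤ → ℤ → Prop
  le_refl : ∀ i, le i i
  le_trans : ∀ i j k, le i j → le j k → le i k
  le_antisymm : ∀ i j, le i j → le j i → i = j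
  le_shift : ∀ i : ℤ, le i (i + n)
  periodic : ∀ i j : ℤ, le i j ↔ le (i + n) (j + n)
  strong : ∀ i j : ℤ, ∃ k : ℤ, le i (j + k * n)

namespace AffinePoset

variable {n : ℕ} (P : AffinePoset n)

def lt (i j : ℤ) : Prop := P.le i j ∧ i ≠ j

/-- The covering relation of the affine poset. -/
def covby (i j : ℤ) : Prop := P.lt i j ∧ ¬ ∃ k, P.lt i k ∧ P.lt k j

open Classical in
/-- `α_τ(x) = Σ_{i ⋖ j, i,j ∈ τ} (x j - x i)`. -/
noncomputable def alpha (τ : Finset ℤ) (x : ℤ → ℝ) : ℝ :=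
  ∑ i ∈ τ, ∑ j ∈ τ, if P.covby i j then x j - x i else 0

/-- An affine map: `x i = x (i + n) + c` with `c = n^{2(n+1)}`. -/
def IsAffineMap (_P : AffinePoset n) (x : ℤ → ℝ) : Prop :=
  ∀ i : ℤ, x i = x (i + n) + (n : ℝ) ^ (2 * (n + 1))

/-- Connectivity in the Hasse diagram of the affine poset, within `τ`. -/
def IsConnectedIn (τ : Finset ℤ) : Prop :=
  ∀ a ∈ τ, ∀ b ∈ τ, Relation.ReflTransGen
    (fun u v => u ∈ τ ∧ v ∈ τ ∧ (P.covby u v ∨ P.covby v u)) a b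

def IsConvexIn (τ : Finset ℤ) : Prop :=
  ∀ a ∈ τ, ∀ c ∈ τ, ∀ b, P.le a b → P.le b c → b ∈ τ

/-- A (proper) tube of the affine poset: connected, convex, of size at least 2,
with at most one element in each residue class modulo `n`. -/
def IsTube (τ : Finset ℤ) : Prop :=
  P.IsConnectedIn τ ∧ P.IsConvexIn τ ∧ 2 ≤ τ.card ∧
  ∀ i ∈ τ, ∀ j ∈ τ, i % (n : ℤ) = j % (n : ℤ) → i = j

/-- The relation `σ ≺ τ` on disjoint tubes. -/
def TubingRel (T : Set (Finset ℤ)) (σ τ : Finset ℤ) : Prop :=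
  σ ∈ T ∧ τ ∈ T ∧ (∀ x ∈ σ, x ∉ τ) ∧ ∃ a ∈ σ, ∃ b ∈ τ, P.lt a b

/-- An `n`-periodic proper tubing of the affine poset. -/
def IsTubing (T : Set (Finset ℤ)) : Prop :=
  (∀ τ ∈ T, P.IsTube τ) ∧
  (∀ τ ∈ T, ∀ k : ℤ, Finset.image (· + k * n) τ ∈ T) ∧
  (∀ σ ∈ T, ∀ τ ∈ T, σ ⊆ τ ∨ τ ⊆ σ ∨ ∀ x ∈ σ, x ∉ τ) ∧
  ∀ τ ∈ T, ¬ Relation.TransGen (P.TubingRel T) τ τ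

/-- A maximal `n`-periodic proper tubing. -/
def IsMaximalTubing (T : Set (Finset ℤ)) : Prop :=
  P.IsTubing T ∧ ∀ T', P.IsTubing T' → T ⊆ T' → T = T'

end AffinePoset


namespace AffinePoset

variable {n : ℕ} (P : AffinePoset n)

lemma lt_irr (i : ℤ) : ¬ P.lt i i := fun h => h.2 rfl

lemma lt_of_lt_of_le {i j k : ℤ} (h1 : P.lt i j) (h2 : P.le j k) : P.lt i k := by
  refine ⟨P.le_trans _ _ _ h1.1 h2, ?_⟩
  rintro rfl
  exact h1.2 (P.le_antisymm _ _ h1.1 h2)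

lemma lt_of_le_of_lt {i j k : ℤ} (h1 : P.le i j) (h2 : P.lt j k) : P.lt i k := by
  refine ⟨P.le_trans _ _ _ h1 h2.1, ?_⟩
  rintro rfl
  exact h2.2 (P.le_antisymm _ _ h2.1 h1)

lemma lt_trans'' {i j k : ℤ} (h1 : P.lt i j) (h2 : P.lt j k) : P.lt i k :=
  P.lt_of_lt_of_le h1 h2.1

lemma per_k (k : ℤ) (i j : ℤ) : P.le (i + k * n) (j + k * n) ↔ P.le i j := by
  induction k using Int.induction_on with
  | zero => simp
  | succ m ih =>
      have e1 : i + ((m : ℤ) + 1) * n = (i + m * n) + n := by ring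
      have e2 : j + ((m : ℤ) + 1) * n = (j + m * n) + n := by ring
      rw [e1, e2, ← P.periodic, ih]
  | pred m ih =>
      have e1 : i + (-(m : ℤ) - 1) * n + n = i + (-(m:ℤ)) * n := by ring
      have e2 : j + (-(m : ℤ) - 1) * n + n = j + (-(m:ℤ)) * n := by ring
      rw [← ih, P.periodic, e1, e2]

lemma lt_shift_k (k : ℤ) (i j : ℤ) : P.lt (i + k * n) (j + k * n) ↔ P.lt i j := by
  unfold AffinePoset.lt
  rw [per_k]
  constructor
  · rintro ⟨h1, h2⟩; exact ⟨h1, fun e => h2 (by rw [e])⟩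
  · rintro ⟨h1, h2⟩; exact ⟨h1, fun e => h2 (by omega)⟩

lemma covby_shift_k (k : ℤ) (i j : ℤ) : P.covby (i + k * n) (j + k * n) ↔ P.covby i j := by
  unfold AffinePoset.covby
  rw [lt_shift_k]
  constructor
  · rintro ⟨h1, h2⟩
    refine ⟨h1, fun ⟨m, hm1, hm2⟩ => h2 ⟨m + k * n, ?_, ?_⟩⟩
    · rw [lt_shift_k]; exact hm1
    · rw [lt_shift_k]; exact hm2
  · rintro ⟨h1, h2⟩
    refine ⟨h1, fun ⟨m, hm1, hm2⟩ => h2 ⟨m - k * n, ?_, ?_⟩⟩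
    · rw [← lt_shift_k P k]
      have e : m - k * (n:ℤ) + k * n = m := by ring
      rw [e]; exact hm1
    · rw [← lt_shift_k P k]
      have e : m - k * (n:ℤ) + k * n = m := by ring
      rw [e]; exact hm2

lemma le_self_add_nat (i : ℤ) (m : ℕ) : P.le i (i + (m : ℤ) * n) := by
  induction m with
  | zero => simpa using P.le_refl i
  | succ m ih =>
      have h1 : P.le (i + (m : ℤ) * n) (i + (m : ℤ) * n + n) := P.le_shift _
      have h2 := P.le_trans _ _ _ ih h1
      have e : i + (m : ℤ) * n + n = i + ((m : ℤ) + 1) * n := by ring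
      rw [e] at h2
      simpa [Int.natCast_succ] using h2

lemma le_self_add_of_nonneg (i : ℤ) {k : ℤ} (hk : 0 ≤ k) : P.le i (i + k * n) := by
  obtain ⟨m, rfl⟩ := Int.eq_ofNat_of_zero_le hk
  exact P.le_self_add_nat i m

/-- shift of a finset by `k·n` -/
def sh (k : ℤ) (τ : Finset ℤ) : Finset ℤ := Finset.image (· + k * (n : ℤ)) τ

lemma mem_sh {k : ℤ} {τ : Finset ℤ} {x : ℤ} : x ∈ sh (n := n) k τ ↔ x - k * n ∈ τ := by
  unfold sh
  simp only [Finset.mem_image]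
  constructor
  · rintro ⟨a, ha, rfl⟩; simpa using ha
  · intro h; exact ⟨x - k * n, h, by ring⟩

lemma mem_sh' {k : ℤ} {τ : Finset ℤ} {a : ℤ} (ha : a ∈ τ) : a + k * (n : ℤ) ∈ sh (n := n) k τ := by
  rw [mem_sh]; simpa using ha

lemma sh_zero (τ : Finset ℤ) : sh (n := n) 0 τ = τ := by
  ext x; rw [mem_sh]; simp

lemma sh_sh (k l : ℤ) (τ : Finset ℤ) : sh (n := n) k (sh (n := n) l τ) = sh (n := n) (k + l) τ := by
  ext x; rw [mem_sh, mem_sh, mem_sh]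
  have e : x - k * (n:ℤ) - l * n = x - (k + l) * n := by ring
  rw [e]

lemma card_sh (k : ℤ) (τ : Finset ℤ) : (sh (n := n) k τ).card = τ.card := by
  unfold sh
  exact Finset.card_image_of_injective _ (add_left_injective _)

lemma sh_subset_sh {k : ℤ} {τ ρ : Finset ℤ} : sh (n := n) k τ ⊆ sh (n := n) k ρ ↔ τ ⊆ ρ := by
  constructor
  · intro h a ha
    have := h (mem_sh' (k := k) ha)
    rw [mem_sh] at this; simpa using this
  · intro h x hx
    rw [mem_sh] at hx ⊢; exact h hx

lemma sh_nonempty {k : ℤ} {τ : Finset ℤ} (h : τ.Nonempty) : (sh (n := n) k τ).Nonempty := by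
  obtain ⟨a, ha⟩ := h; exact ⟨a + k * n, mem_sh' ha⟩

end AffinePoset

namespace AffinePoset

variable {n : ℕ} (P : AffinePoset n)

lemma isTube_sh {τ : Finset ℤ} (k : ℤ) (h : P.IsTube τ) : P.IsTube (sh (n := n) k τ) := by
  obtain ⟨hconn, hconv, hcard, hres⟩ := h
  refine ⟨?_, ?_, ?_, ?_⟩
  · intro a ha b hb
    rw [mem_sh] at ha hb
    have := hconn _ ha _ hb
    have lift := Relation.ReflTransGen.lift (r := fun u v => u ∈ τ ∧ v ∈ τ ∧ (P.covby u v ∨ P.covby v u))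
      (p := fun u v => u ∈ sh (n := n) k τ ∧ v ∈ sh (n := n) k τ ∧ (P.covby u v ∨ P.covby v u))
      (f := fun z => z + k * (n : ℤ)) ?_ _ _ this
    · simpa [sub_add_cancel, Function.onFun] using lift
    · rintro u v ⟨hu, hv, hc⟩
      refine ⟨mem_sh' hu, mem_sh' hv, ?_⟩
      rcases hc with hc | hc
      · exact Or.inl ((P.covby_shift_k k u v).mpr hc)
      · exact Or.inr ((P.covby_shift_k k v u).mpr hc)
  · intro a ha c hc b hab hbc
    rw [mem_sh] at ha hc ⊢
    have hab' : P.le (a - k * n) (b - k * n) := by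
      rw [← per_k P k]
      have e1 : a - k * (n:ℤ) + k * n = a := by ring
      have e2 : b - k * (n:ℤ) + k * n = b := by ring
      rw [e1, e2]; exact hab
    have hbc' : P.le (b - k * n) (c - k * n) := by
      rw [← per_k P k]
      have e1 : c - k * (n:ℤ) + k * n = c := by ring
      have e2 : b - k * (n:ℤ) + k * n = b := by ring
      rw [e1, e2]; exact hbc
    exact hconv _ ha _ hc _ hab' hbc'
  · rw [card_sh]; exact hcard
  · intro i hi j hj hij
    rw [mem_sh] at hi hj
    have : i - k * n = j - k * n := by
      apply hres _ hi _ hj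
      have e1 : (i - k * n) % (n:ℤ) = i % n := by
        conv_rhs => rw [show i = (i - k * n) + n * k by ring]
        rw [Int.add_mul_emod_self_left]
      have e2 : (j - k * n) % (n:ℤ) = j % n := by
        conv_rhs => rw [show j = (j - k * n) + n * k by ring]
        rw [Int.add_mul_emod_self_left]
      rw [e1, e2, hij]
    omega

/-- A convenient bundle of the ambient hypotheses. -/
structure Ctx (n : ℕ) where
  P : AffinePoset n
  T : Set (Finset ℤ)
  σ : Finset ℤ
  hn : 0 < n
  hT : P.IsMaximalTubing T
  hσ : σ ∈ T
  hcard : σ.card = n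

namespace Ctx

variable {n : ℕ} (C : Ctx n)

lemma tubes {τ : Finset ℤ} (h : τ ∈ C.T) : C.P.IsTube τ := C.hT.1.1 τ h

lemma shiftmem {τ : Finset ℤ} (h : τ ∈ C.T) (k : ℤ) : sh (n := n) k τ ∈ C.T :=
  C.hT.1.2.1 τ h k

lemma tricho {τ ρ : Finset ℤ} (hτ : τ ∈ C.T) (hρ : ρ ∈ C.T) :
    τ ⊆ ρ ∨ ρ ⊆ τ ∨ ∀ x ∈ τ, x ∉ ρ := C.hT.1.2.2.1 τ hτ ρ hρ

lemma acyc {τ : Finset ℤ} (hτ : τ ∈ C.T) : ¬ Relation.TransGen (C.P.TubingRel C.T) τ τ :=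
  C.hT.1.2.2.2 τ hτ

lemma tube_nonempty {τ : Finset ℤ} (h : τ ∈ C.T) : τ.Nonempty := by
  have := (C.tubes h).2.2.1
  exact Finset.card_pos.mp (by omega)

lemma card_le_n {τ : Finset ℤ} (h : τ ∈ C.T) : τ.card ≤ n := by
  have hres := (C.tubes h).2.2.2
  have : τ.card = (τ.image (· % (n : ℤ))).card := by
    rw [Finset.card_image_of_injOn]
    intro i hi j hj hij
    exact hres i hi j hj hij
  rw [this]
  have hsub : τ.image (· % (n : ℤ)) ⊆ Finset.Ico (0 : ℤ) n := by
    intro x hx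
    simp only [Finset.mem_image] at hx
    obtain ⟨a, _, rfl⟩ := hx
    rw [Finset.mem_Ico]
    constructor
    · exact Int.emod_nonneg a (by exact_mod_cast C.hn.ne')
    · exact Int.emod_lt_of_pos a (by exact_mod_cast C.hn)
  calc (τ.image (· % (n : ℤ))).card ≤ (Finset.Ico (0 : ℤ) n).card := Finset.card_le_card hsub
    _ = n := by rw [Int.card_Ico]; simp

lemma sigma_res_inj {i j : ℤ} (hi : i ∈ C.σ) (hj : j ∈ C.σ) (h : i % (n:ℤ) = j % n) : i = j :=
  (C.tubes C.hσ).2.2.2 i hi j hj h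

/-- σ covers every residue class -/
lemma cover (i : ℤ) : ∃ s k : ℤ, s ∈ C.σ ∧ i = s + k * n := by
  have himg : C.σ.image (· % (n : ℤ)) = Finset.Ico (0 : ℤ) n := by
    apply Finset.eq_of_subset_of_card_le
    · intro x hx
      simp only [Finset.mem_image] at hx
      obtain ⟨a, _, rfl⟩ := hx
      rw [Finset.mem_Ico]
      exact ⟨Int.emod_nonneg a (by exact_mod_cast C.hn.ne'), Int.emod_lt_of_pos a (by exact_mod_cast C.hn)⟩
    · rw [Finset.card_image_of_injOn (fun i hi j hj hij => C.sigma_res_inj hi hj hij), C.hcard,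
        Int.card_Ico]
      simp
  have hmem : i % (n : ℤ) ∈ C.σ.image (· % (n : ℤ)) := by
    rw [himg, Finset.mem_Ico]
    exact ⟨Int.emod_nonneg i (by exact_mod_cast C.hn.ne'), Int.emod_lt_of_pos i (by exact_mod_cast C.hn)⟩
  simp only [Finset.mem_image] at hmem
  obtain ⟨s, hs, hmod⟩ := hmem
  have hdvd : (n : ℤ) ∣ (i - s) := by
    apply Int.dvd_of_emod_eq_zero
    rw [Int.sub_emod, hmod]
    simp
  obtain ⟨m, hm⟩ := hdvd
  refine ⟨s, m, hs, ?_⟩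
  rw [mul_comm]
  omega

lemma decomp_unique {s k s' k' : ℤ} (hs : s ∈ C.σ) (hs' : s' ∈ C.σ)
    (h : s + k * n = s' + k' * n) : s = s' ∧ k = k' := by
  have hmod : s % (n : ℤ) = s' % n := by
    have e1 : s % (n:ℤ) = (s + k * n) % n := by
      rw [show s + k * (n:ℤ) = s + n * k by ring, Int.add_mul_emod_self_left]
    have e2 : s' % (n:ℤ) = (s' + k' * n) % n := by
      rw [show s' + k' * (n:ℤ) = s' + n * k' by ring, Int.add_mul_emod_self_left]
    rw [e1, e2, h]
  have := C.sigma_res_inj hs hs' hmod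
  have hn : (0:ℤ) < n := by exact_mod_cast C.hn
  refine ⟨this, ?_⟩
  have h2 : k * (n:ℤ) = k' * n := by omega
  exact mul_right_cancel₀ (by exact_mod_cast C.hn.ne') h2

/-- representative in σ -/
noncomputable def rp (i : ℤ) : ℤ := (C.cover i).choose

/-- level -/
noncomputable def lv (i : ℤ) : ℤ := (C.cover i).choose_spec.choose

lemma rp_mem (i : ℤ) : C.rp i ∈ C.σ := (C.cover i).choose_spec.choose_spec.1

lemma rp_lv (i : ℤ) : i = C.rp i + C.lv i * n := (C.cover i).choose_spec.choose_spec.2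

lemma rp_eq {i s k : ℤ} (hs : s ∈ C.σ) (h : i = s + k * n) : C.rp i = s ∧ C.lv i = k := by
  have := C.rp_lv i
  exact C.decomp_unique (C.rp_mem i) hs (by omega)

lemma rp_of_mem {s : ℤ} (hs : s ∈ C.σ) : C.rp s = s ∧ C.lv s = 0 :=
  C.rp_eq hs (by ring_nf)

lemma lv_add (i : ℤ) (k : ℤ) : C.rp (i + k * n) = C.rp i ∧ C.lv (i + k * n) = C.lv i + k := by
  apply C.rp_eq (C.rp_mem i)
  have := C.rp_lv i
  rw [add_mul]
  omega

lemma mem_sh_sigma_iff {i k : ℤ} : i ∈ sh (n := n) k C.σ ↔ C.lv i = k := by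
  rw [mem_sh]
  constructor
  · intro h
    exact (C.rp_eq h (by ring)).2
  · intro h
    have h2 := C.rp_lv i
    rw [h] at h2
    have h3 : i - k * n = C.rp i := by omega
    rw [h3]; exact C.rp_mem i

/-- levels are monotone wrt the order -/
lemma lv_mono {a b : ℤ} (h : C.P.le a b) : C.lv a ≤ C.lv b := by
  by_contra hlt
  push_neg at hlt
  set k := C.lv a with hk
  set k' := C.lv b with hk'
  have hb' : C.P.le b (b + (k - k') * n) := C.P.le_self_add_of_nonneg b (by omega)
  have hmem1 : a ∈ sh (n := n) k C.σ := C.mem_sh_sigma_iff.mpr rfl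
  have hmem2 : b + (k - k') * (n:ℤ) ∈ sh (n := n) k C.σ := by
    rw [C.mem_sh_sigma_iff]
    have := (C.lv_add b (k - k')).2
    omega
  have htube := C.P.isTube_sh k (C.tubes C.hσ)
  have hconv := htube.2.1
  have hb : b ∈ sh (n := n) k C.σ := hconv _ hmem1 _ hmem2 _ h hb'
  rw [C.mem_sh_sigma_iff] at hb
  omega

/-- every tube of T is a shifted subtube of σ -/
lemma stepA {τ : Finset ℤ} (h : τ ∈ C.T) : ∃ τ₀ k, τ₀ ∈ C.T ∧ τ₀ ⊆ C.σ ∧ τ = sh (n := n) k τ₀ := by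
  obtain ⟨a, ha⟩ := C.tube_nonempty h
  set k := C.lv a with hk
  have hσk : sh (n := n) k C.σ ∈ C.T := C.shiftmem C.hσ k
  rcases C.tricho h hσk with hsub | hsup | hdisj
  · refine ⟨sh (n := n) (-k) τ, k, C.shiftmem h (-k), ?_, ?_⟩
    · have : sh (n := n) (-k) τ ⊆ sh (n := n) (-k) (sh (n := n) k C.σ) :=
        (sh_subset_sh (n := n)).mpr hsub
      rwa [sh_sh, neg_add_cancel, sh_zero] at this
    · rw [sh_sh]
      simp [sh_zero]
  · have hcards : τ.card ≤ (sh (n := n) k C.σ).card := by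
      rw [card_sh, C.hcard]; exact C.card_le_n h
    have : τ = sh (n := n) k C.σ := (Finset.eq_of_subset_of_card_le hsup hcards).symm
    exact ⟨C.σ, k, C.hσ, subset_rfl, this⟩
  · exfalso
    exact hdisj a ha (C.mem_sh_sigma_iff.mpr rfl)

end Ctx

end AffinePoset

namespace AffinePoset

variable {n : ℕ} (P : AffinePoset n)

lemma alpha_congr {τ : Finset ℤ} {x y : ℤ → ℝ} (h : ∀ i ∈ τ, x i = y i) :
    P.alpha τ x = P.alpha τ y := by
  unfold alpha
  apply Finset.sum_congr rfl
  intro i hi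
  apply Finset.sum_congr rfl
  intro j hj
  split_ifs with hc
  · rw [h i hi, h j hj]
  · rfl

lemma alpha_add (τ : Finset ℤ) (x y : ℤ → ℝ) :
    P.alpha τ (fun i => x i + y i) = P.alpha τ x + P.alpha τ y := by
  unfold alpha
  rw [← Finset.sum_add_distrib]
  apply Finset.sum_congr rfl
  intro i _
  rw [← Finset.sum_add_distrib]
  apply Finset.sum_congr rfl
  intro j _
  split_ifs with hc <;> ring

lemma alpha_smul (τ : Finset ℤ) (c : ℝ) (x : ℤ → ℝ) :
    P.alpha τ (fun i => c * x i) = c * P.alpha τ x := by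
  unfold alpha
  rw [Finset.mul_sum]
  apply Finset.sum_congr rfl
  intro i _
  rw [Finset.mul_sum]
  apply Finset.sum_congr rfl
  intro j _
  split_ifs with hc <;> ring

lemma alpha_const (τ : Finset ℤ) (c : ℝ) : P.alpha τ (fun _ => c) = 0 := by
  unfold alpha
  apply Finset.sum_eq_zero
  intro i _
  apply Finset.sum_eq_zero
  intro j _
  split_ifs with hc <;> ring

lemma alpha_sub (τ : Finset ℤ) (x y : ℤ → ℝ) :
    P.alpha τ (fun i => x i - y i) = P.alpha τ x - P.alpha τ y := by
  have h1 := P.alpha_add τ (fun i => x i - y i) y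
  simp only [sub_add_cancel] at h1
  linarith

lemma shift_val {x : ℤ → ℝ} {t : ℝ} (hx : ∀ i, x (i + (n : ℤ)) = x i - t) (k i : ℤ) :
    x (i + k * n) = x i - k * t := by
  induction k using Int.induction_on with
  | zero => simp
  | succ m ih =>
      have e : i + ((m : ℤ) + 1) * n = (i + m * n) + n := by ring
      rw [e, hx, ih]
      push_cast
      ring
  | pred m ih =>
      have e : (i + (-(m:ℤ) - 1) * n) + (n:ℤ) = i + (-(m:ℤ)) * n := by ring
      have h2 := hx (i + (-(m:ℤ) - 1) * n)
      rw [e, ih] at h2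
      push_cast at h2 ⊢
      linarith

lemma alpha_sh {x : ℤ → ℝ} {t : ℝ} (hx : ∀ i, x (i + (n : ℤ)) = x i - t) (k : ℤ) (τ : Finset ℤ) :
    P.alpha (sh (n := n) k τ) x = P.alpha τ x := by
  unfold alpha sh
  have hinj : ∀ a ∈ τ, ∀ b ∈ τ, a + k * (n:ℤ) = b + k * n → a = b := by
    intro a _ b _ h; omega
  rw [Finset.sum_image hinj]
  apply Finset.sum_congr rfl
  intro i hi
  rw [Finset.sum_image hinj]
  apply Finset.sum_congr rfl
  intro j hj
  rw [P.covby_shift_k k i j]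
  split_ifs with hc
  · rw [shift_val (n := n) hx, shift_val (n := n) hx]
    ring
  · rfl

lemma affine_step {x : ℤ → ℝ} (hx : P.IsAffineMap x) (i : ℤ) :
    x (i + (n : ℤ)) = x i - (n : ℝ) ^ (2 * (n + 1)) := by
  have := hx i
  linarith

namespace Ctx

variable {n : ℕ} (C : Ctx n)

/-- Part 1 of the theorem. -/
lemma all_of_sub {x : ℤ → ℝ} (hx : C.P.IsAffineMap x)
    (h : ∀ τ ∈ C.T, τ ⊆ C.σ → C.P.alpha τ x = (n : ℝ) ^ (2 * τ.card)) :
    ∀ τ ∈ C.T, C.P.alpha τ x = (n : ℝ) ^ (2 * τ.card) := by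
  intro τ hτ
  obtain ⟨τ₀, k, hτ₀T, hτ₀σ, rfl⟩ := C.stepA hτ
  rw [C.P.alpha_sh (C.P.affine_step hx) k τ₀, card_sh]
  exact h τ₀ hτ₀T hτ₀σ

end Ctx

end AffinePoset

namespace AffinePoset

/-- one-sided disjointness, as used in the tubing axioms -/
def Dis (X Y : Finset ℤ) : Prop := ∀ x ∈ X, x ∉ Y

lemma Dis.symm {X Y : Finset ℤ} (h : Dis X Y) : Dis Y X := fun y hy hx => h y hx hy

namespace Ctx

variable {n : ℕ} (C : Ctx n)

/-- vertices for the auxiliary relation: tubes of T or singletons -/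
def QV (X : Finset ℤ) : Prop := X ∈ C.T ∨ ∃ a : ℤ, X = {a}

/-- the auxiliary "precedence" relation on tubes-or-singletons -/
def Q (X Y : Finset ℤ) : Prop :=
  C.QV X ∧ C.QV Y ∧ Dis X Y ∧ ∃ a ∈ X, ∃ b ∈ Y, C.P.lt a b

lemma qv_nonempty {X : Finset ℤ} (h : C.QV X) : X.Nonempty := by
  rcases h with h | ⟨a, rfl⟩
  · exact C.tube_nonempty h
  · exact ⟨a, Finset.mem_singleton_self a⟩

lemma qv_convex {X : Finset ℤ} (h : C.QV X) : C.P.IsConvexIn X := by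
  rcases h with h | ⟨a, rfl⟩
  · exact (C.tubes h).2.1
  · intro u hu w hw b hub hbw
    simp only [Finset.mem_singleton] at hu hw ⊢
    subst hu; subst hw
    exact (C.P.le_antisymm _ _ hbw hub)

lemma lamin {X Y : Finset ℤ} (hX : C.QV X) (hY : C.QV Y) : X ⊆ Y ∨ Y ⊆ X ∨ Dis X Y := by
  rcases hX with hX | ⟨a, rfl⟩
  · rcases hY with hY | ⟨b, rfl⟩
    · exact C.tricho hX hY
    · by_cases hb : b ∈ X
      · exact Or.inr (Or.inl (by intro x hx; simp only [Finset.mem_singleton] at hx; rwa [hx]))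
      · refine Or.inr (Or.inr ?_)
        intro x hx hxb
        simp only [Finset.mem_singleton] at hxb
        exact hb (hxb ▸ hx)
  · by_cases ha : a ∈ Y
    · exact Or.inl (by intro x hx; simp only [Finset.mem_singleton] at hx; rwa [hx])
    · refine Or.inr (Or.inr ?_)
      intro x hx hxY
      simp only [Finset.mem_singleton] at hx
      exact ha (hx ▸ hxY)

section Machine

variable (inM : Finset ℤ → Prop) (S : Finset ℤ → Finset ℤ → Prop)

/-- The disjoint-cycle machine, tube base point. -/
lemma dm_tube
    (hS : ∀ a b, S a b → C.Q a b ∧ inM a ∧ inM b)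
    (hpw : ∀ a b, inM a → inM b → a ≠ b → Dis a b)
    (Z : Finset ℤ) (hZT : Z ∈ C.T) (hZM : inM Z) : ¬ Relation.TransGen S Z Z := by
  intro hcyc
  have main : ∀ V, Relation.TransGen S Z V →
      ∃ Y, Y ∈ C.T ∧ inM Y ∧ (Relation.TransGen (C.P.TubingRel C.T) Z Y ∨ Y = Z) ∧
        ((V = Y ∧ Relation.TransGen (C.P.TubingRel C.T) Z Y) ∨
         ∃ y s b, y ∈ Y ∧ s ∉ Y ∧ C.P.lt y s ∧ C.P.le s b ∧ V = {b}) := by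
    intro V h
    induction h with
    | @single V e =>
        obtain ⟨⟨hQVZ, hQVV, hdis, a0, ha0, t0, ht0, hlt⟩, hMZ', hMV⟩ := hS _ _ e
        rcases hQVV with hVT | ⟨t, rfl⟩
        · have hrel : C.P.TubingRel C.T Z V := ⟨hZT, hVT, hdis, a0, ha0, t0, ht0, hlt⟩
          exact ⟨V, hVT, hMV, Or.inl (Relation.TransGen.single hrel),
            Or.inl ⟨rfl, Relation.TransGen.single hrel⟩⟩
        · have ht0' : t0 ∉ Z := fun habs => hdis t0 habs ht0
          refine ⟨Z, hZT, hZM, Or.inr rfl,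
            Or.inr ⟨a0, t0, t0, ha0, ht0', hlt, C.P.le_refl t0, ?_⟩⟩
          simp only [Finset.mem_singleton] at ht0
          rw [ht0]
    | @tail V V' h e ih =>
        obtain ⟨⟨hQVV, hQVV', hdis, a0, ha0, t0, ht0, hlt⟩, hMV, hMV'⟩ := hS _ _ e
        obtain ⟨Y, hYT, hYM, hmark, hpos⟩ := ih
        rcases hpos with ⟨rfl, hTG⟩ | ⟨y, s, b, hy, hs, hys, hsb, rfl⟩
        · -- currently at tube Y = V
          rcases hQVV' with hWT | ⟨t, rfl⟩
          · have hrel : C.P.TubingRel C.T V V' := ⟨hYT, hWT, hdis, a0, ha0, t0, ht0, hlt⟩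
            exact ⟨V', hWT, hMV', Or.inl (hTG.tail hrel), Or.inl ⟨rfl, hTG.tail hrel⟩⟩
          · have ht0' : t0 ∉ V := fun habs => hdis t0 habs ht0
            refine ⟨V, hYT, hYM, Or.inl hTG,
              Or.inr ⟨a0, t0, t0, ha0, ht0', hlt, C.P.le_refl t0, ?_⟩⟩
            simp only [Finset.mem_singleton] at ht0
            rw [ht0]
        · -- in a singleton run after tube Y, V = {b}
          have ha0b : a0 = b := by simpa using ha0
          subst ha0b
          rcases hQVV' with hWT | ⟨t, rfl⟩
          · by_cases hWY : V' = Y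
            · subst hWY
              have hsV' : s ∈ V' := (C.tubes hYT).2.1 y hy t0 ht0 s hys.1
                (C.P.le_trans _ _ _ hsb hlt.1)
              exact absurd hsV' hs
            · have hdisYW : Dis Y V' := hpw _ _ hYM hMV' (fun h => hWY h.symm)
              have hytlt : C.P.lt y t0 := C.P.lt_trans'' (C.P.lt_of_lt_of_le hys hsb) hlt
              have hrel : C.P.TubingRel C.T Y V' := ⟨hYT, hWT, hdisYW, y, hy, t0, ht0, hytlt⟩
              have hTG' : Relation.TransGen (C.P.TubingRel C.T) Z V' := by
                rcases hmark with hTG | rfl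
                · exact hTG.tail hrel
                · exact Relation.TransGen.single hrel
              exact ⟨V', hWT, hMV', Or.inl hTG', Or.inl ⟨rfl, hTG'⟩⟩
          · refine ⟨Y, hYT, hYM, hmark, Or.inr ⟨y, s, t0, hy, hs, hys,
              C.P.le_trans _ _ _ hsb hlt.1, ?_⟩⟩
            simp only [Finset.mem_singleton] at ht0
            rw [ht0]
  obtain ⟨Y, hYT, hYM, hmark, hpos⟩ := main Z hcyc
  rcases hpos with ⟨hZY, hTG⟩ | ⟨y, s, b, hy, hs, hys, hsb, hZb⟩
  · rw [← hZY] at hTG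
    exact C.acyc hZT hTG
  · have hcard := (C.tubes hZT).2.2.1
    rw [hZb] at hcard
    simp at hcard

/-- The disjoint-cycle machine, general base point. -/
lemma dm
    (hS : ∀ a b, S a b → C.Q a b ∧ inM a ∧ inM b)
    (hpw : ∀ a b, inM a → inM b → a ≠ b → Dis a b)
    (Z : Finset ℤ) : ¬ Relation.TransGen S Z Z := by
  intro hcyc
  have hQVZ : C.QV Z ∧ inM Z := by
    cases hcyc with
    | single e => exact ⟨(hS _ _ e).1.1, (hS _ _ e).2.1⟩
    | tail h e => exact ⟨(hS _ _ e).1.2.1, (hS _ _ e).2.2⟩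
  rcases hQVZ with ⟨hQVZ, hMZ⟩
  rcases hQVZ with hZT | ⟨z, rfl⟩
  · exact C.dm_tube inM S hS hpw Z hZT hMZ hcyc
  · -- singleton base point: find a tube on the cycle, or pure lt-cycle
    have main : ∀ V, Relation.TransGen S {z} V →
        ((∃ b, V = {b} ∧ C.P.lt z b) ∨
         ∃ W, W ∈ C.T ∧ inM W ∧ Relation.TransGen S {z} W ∧ Relation.ReflTransGen S W V) := by
      intro V h
      induction h with
      | @single V e =>
          obtain ⟨⟨_, hQVV, hdis, a0, ha0, t0, ht0, hlt⟩, _, hMV⟩ := hS _ _ e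
          have ha0z : a0 = z := by simpa using ha0
          subst ha0z
          rcases hQVV with hVT | ⟨t, rfl⟩
          · exact Or.inr ⟨V, hVT, hMV, Relation.TransGen.single e, Relation.ReflTransGen.refl⟩
          · simp only [Finset.mem_singleton] at ht0
            exact Or.inl ⟨t, rfl, ht0 ▸ hlt⟩
      | @tail V V' h e ih =>
          obtain ⟨⟨_, hQVV', hdis, a0, ha0, t0, ht0, hlt⟩, hMV, hMV'⟩ := hS _ _ e
          rcases ih with ⟨b, rfl, hzb⟩ | ⟨W, hWT, hWM, hTG, hRT⟩
          · have ha0b : a0 = b := by simpa using ha0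
            subst ha0b
            rcases hQVV' with hVT | ⟨t, rfl⟩
            · exact Or.inr ⟨V', hVT, hMV', h.tail e, Relation.ReflTransGen.refl⟩
            · simp only [Finset.mem_singleton] at ht0
              exact Or.inl ⟨t, rfl, ht0 ▸ (C.P.lt_trans'' hzb hlt)⟩
          · exact Or.inr ⟨W, hWT, hWM, hTG, hRT.tail e⟩
    rcases main _ hcyc with ⟨b, hb, hzb⟩ | ⟨W, hWT, hWM, hTG, hRT⟩
    · have hbz : z = b := Finset.singleton_injective hb
      rw [← hbz] at hzb
      exact C.P.lt_irr z hzb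
    · have hWne : W ≠ {z} := by
        intro h
        have hcard := (C.tubes hWT).2.2.1
        rw [h] at hcard
        simp at hcard
      have hTGW : Relation.TransGen S W W := by
        rcases Relation.reflTransGen_iff_eq_or_transGen.mp hRT with h | h
        · exact absurd h.symm hWne
        · exact h.trans hTG
      exact C.dm_tube inM S hS hpw W hWT hWM hTGW

end Machine

end Ctx

end AffinePoset

namespace AffinePoset

namespace Ctx

variable {n : ℕ} (C : Ctx n)

lemma q_nonself {A : Finset ℤ} (h : C.Q A A) : False := by
  obtain ⟨_, hQV, hdis, a, ha, b, hb, _⟩ := h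
  exact hdis a ha ha

/-- Acyclicity of the auxiliary relation `Q`. -/
lemma qacyc (A : Finset ℤ) : ¬ Relation.TransGen C.Q A A := by
  intro h
  -- extract a cycle list
  obtain ⟨c, hac, hca⟩ : ∃ c, C.Q A c ∧ Relation.ReflTransGen C.Q c A := by
    cases h with
    | single e => exact ⟨A, e, Relation.ReflTransGen.refl⟩
    | tail h' e =>
        cases (Relation.TransGen.head'_iff.mp (h'.tail e)) with
        | intro c hc => exact ⟨c, hc.1, hc.2⟩
  obtain ⟨l, hchain, hlast⟩ := List.exists_isChain_cons_of_relationReflTransGen hca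
  set L : List (Finset ℤ) := A :: c :: l with hL
  have hchainL : List.Chain C.Q A (c :: l) := List.Chain.cons hac hchain
  set F : Finset (Finset ℤ) := L.toFinset with hF
  -- all members are QV
  have chain_qv : ∀ (x : Finset ℤ) (l' : List (Finset ℤ)), List.Chain C.Q x l' → C.QV x →
      ∀ y ∈ (x :: l'), C.QV y := by
    intro x l'
    induction l' generalizing x with
    | nil => intro _ hx y hy; simp only [List.mem_singleton] at hy; rwa [hy]
    | cons z l'' ih =>
        intro hch hx y hy
        unfold List.Chain at hch; rw [List.chain_cons] at hch
        rcases List.mem_cons.mp hy with rfl | hy'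
        · exact hx
        · exact ih z hch.2 hch.1.2.1 y hy'
  have hQVF : ∀ X ∈ F, C.QV X := by
    intro X hX
    exact chain_qv A (c :: l) hchainL hac.1 X (List.mem_toFinset.mp hX)
  -- maximal member function
  have hM : ∀ X : Finset ℤ, ∃ MX : Finset ℤ, X ∈ F →
      (MX ∈ F ∧ X ⊆ MX ∧ ∀ Y ∈ F, MX ⊆ Y → Y = MX) := by
    intro X
    by_cases hX : X ∈ F
    · have hne : (F.filter (fun Y => X ⊆ Y)).Nonempty :=
        ⟨X, Finset.mem_filter.mpr ⟨hX, subset_rfl⟩⟩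
      obtain ⟨MX, hmem, hmax⟩ := Finset.exists_max_image _ (fun Y => Y.card) hne
      rw [Finset.mem_filter] at hmem
      refine ⟨MX, fun _ => ⟨hmem.1, hmem.2, ?_⟩⟩
      intro Y hY hsub
      have hY' : Y ∈ F.filter (fun Y => X ⊆ Y) :=
        Finset.mem_filter.mpr ⟨hY, hmem.2.trans hsub⟩
      exact (Finset.eq_of_subset_of_card_le hsub (hmax Y hY')).symm
    · exact ⟨∅, fun h => absurd h hX⟩
  choose M hMspec using hM
  have hMF : ∀ X ∈ F, M X ∈ F := fun X hX => (hMspec X hX).1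
  have hMsub : ∀ X ∈ F, X ⊆ M X := fun X hX => (hMspec X hX).2.1
  have hMpw : ∀ X ∈ F, ∀ Y ∈ F, M X = M Y ∨ Dis (M X) (M Y) := by
    intro X hX Y hY
    rcases C.lamin (hQVF _ (hMF X hX)) (hQVF _ (hMF Y hY)) with hs | hs | hs
    · exact Or.inl ((hMspec X hX).2.2 (M Y) (hMF Y hY) hs).symm
    · exact Or.inl ((hMspec Y hY).2.2 (M X) (hMF X hX) hs)
    · exact Or.inr hs
  set inM : Finset ℤ → Prop := fun X => ∃ y ∈ F, M y = X with hinM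
  set QM : Finset ℤ → Finset ℤ → Prop := fun a b => C.Q a b ∧ inM a ∧ inM b with hQM
  have hedge : ∀ u v, C.Q u v → u ∈ F → v ∈ F → M u ≠ M v → QM (M u) (M v) := by
    intro u v he hu hv hne
    obtain ⟨_, _, _, a, ha, b, hb, hlt⟩ := he
    refine ⟨⟨hQVF _ (hMF u hu), hQVF _ (hMF v hv), ?_, a, hMsub u hu ha, b, hMsub v hv hb, hlt⟩,
      ⟨u, hu, rfl⟩, ⟨v, hv, rfl⟩⟩
    rcases hMpw u hu v hv with h | h
    · exact absurd h hne
    · exact h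
  -- walk lemma
  have walk : ∀ (x : Finset ℤ) (l' : List (Finset ℤ)), List.Chain C.Q x l' → x ∈ F →
      (∀ y ∈ l', y ∈ F) →
      Relation.ReflTransGen QM (M x) (M ((x :: l').getLast (List.cons_ne_nil _ _))) := by
    intro x l'
    induction l' generalizing x with
    | nil => intro _ _ _; simp only [List.getLast_singleton]; exact Relation.ReflTransGen.refl
    | cons y l'' ih =>
        intro hch hx hmem
        unfold List.Chain at hch; rw [List.chain_cons] at hch
        have hyF : y ∈ F := hmem y (List.mem_cons_self)
        have hrec := ih y hch.2 hyF (fun z hz => hmem z (List.mem_cons_of_mem _ hz))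
        have hgl : (x :: y :: l'').getLast (List.cons_ne_nil _ _) =
            (y :: l'').getLast (List.cons_ne_nil _ _) := List.getLast_cons _
        rw [hgl]
        by_cases heq : M x = M y
        · rwa [heq]
        · exact Relation.ReflTransGen.head (hedge x y hch.1 hx hyF heq) hrec
  -- split lemma
  have split : ∀ (x : Finset ℤ) (l' : List (Finset ℤ)), List.Chain C.Q x l' → x ∈ F →
      (∀ y ∈ l', y ∈ F) →
      (∀ y ∈ (x :: l'), M y = M x) ∨
      (∃ u v, QM (M u) (M v) ∧ Relation.ReflTransGen QM (M x) (M u) ∧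
        Relation.ReflTransGen QM (M v) (M ((x :: l').getLast (List.cons_ne_nil _ _)))) := by
    intro x l'
    induction l' generalizing x with
    | nil =>
        intro _ _ _
        left
        intro y hy
        simp only [List.mem_singleton] at hy
        rw [hy]
    | cons y l'' ih =>
        intro hch hx hmem
        unfold List.Chain at hch; rw [List.chain_cons] at hch
        have hyF : y ∈ F := hmem y (List.mem_cons_self)
        have hgl : (x :: y :: l'').getLast (List.cons_ne_nil _ _) =
            (y :: l'').getLast (List.cons_ne_nil _ _) := List.getLast_cons _
        by_cases heq : M x = M y
        · rcases ih y hch.2 hyF (fun z hz => hmem z (List.mem_cons_of_mem _ hz)) with hall | hex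
          · left
            intro z hz
            rcases List.mem_cons.mp hz with rfl | hz'
            · rfl
            · rw [hall z hz', heq]
          · obtain ⟨u, v, hq, h1, h2⟩ := hex
            right
            refine ⟨u, v, hq, ?_, ?_⟩
            · rw [heq]; exact h1
            · rw [hgl]; exact h2
        · right
          refine ⟨x, y, hedge x y hch.1 hx hyF heq, Relation.ReflTransGen.refl, ?_⟩
          rw [hgl]
          exact walk y l'' hch.2 hyF (fun z hz => hmem z (List.mem_cons_of_mem _ hz))
  -- apply
  have hmemF : ∀ y ∈ (c :: l), y ∈ F := by
    intro y hy
    rw [hF, hL]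
    exact List.mem_toFinset.mpr (List.mem_cons_of_mem _ hy)
  have hAF : A ∈ F := by
    rw [hF, hL]
    exact List.mem_toFinset.mpr (List.mem_cons_self)
  have hlastL : (A :: c :: l).getLast (List.cons_ne_nil _ _) = A := by
    rw [List.getLast_cons (List.cons_ne_nil _ _)]
    exact hlast
  rcases split A (c :: l) hchainL hAF hmemF with hall | ⟨u, v, hq, h1, h2⟩
  · -- single maximal member: impossible
    set M₀ := M A with hM₀
    have hM₀F : M₀ ∈ F := hMF A hAF
    have hM₀L : M₀ ∈ L := List.mem_toFinset.mp hM₀F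
    -- incident edge lemma
    have incident : ∀ (x : Finset ℤ) (l' : List (Finset ℤ)), List.Chain C.Q x l' → l' ≠ [] →
        ∀ z ∈ (x :: l'), ∃ w ∈ (x :: l'), C.Q z w ∨ C.Q w z := by
      intro x l'
      induction l' generalizing x with
      | nil => intro _ hne; exact absurd rfl hne
      | cons y l'' ih =>
          intro hch _ z hz
          unfold List.Chain at hch; rw [List.chain_cons] at hch
          rcases List.mem_cons.mp hz with rfl | hz'
          · exact ⟨y, List.mem_cons_of_mem _ (List.mem_cons_self), Or.inl hch.1⟩
          · rcases eq_or_ne l'' [] with rfl | hne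
            · simp only [List.mem_singleton] at hz'
              subst hz'
              exact ⟨x, List.mem_cons_self, Or.inr hch.1⟩
            · obtain ⟨w, hw, hqw⟩ := ih y hch.2 hne z hz'
              exact ⟨w, List.mem_cons_of_mem _ hw, hqw⟩
    obtain ⟨w, hwL, hqw⟩ := incident A (c :: l) hchainL (List.cons_ne_nil _ _) M₀ hM₀L
    have hwF : w ∈ F := List.mem_toFinset.mpr hwL
    have hwsub : w ⊆ M₀ := by
      have h1 : w ⊆ M w := hMsub w hwF
      have h2 : M w = M₀ := by
        rw [hM₀]
        exact hall w hwL
      rwa [h2] at h1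
    obtain ⟨e0, he0⟩ := C.qv_nonempty (hQVF w hwF)
    rcases hqw with hq | hq
    · exact hq.2.2.1 e0 (hwsub he0) he0
    · exact hq.2.2.1 e0 he0 (hwsub he0)
  · -- genuine projected cycle: use the machine
    rw [hlastL] at h2
    have hr : Relation.ReflTransGen QM (M v) (M u) := h2.trans h1
    have hcyc : Relation.TransGen QM (M u) (M u) := by
      rcases Relation.reflTransGen_iff_eq_or_transGen.mp hr with heq | htg
      · rw [heq] at hq
        exact absurd hq.1 C.q_nonself
      · exact (Relation.TransGen.single hq).trans htg
    exact C.dm inM QM (fun a b hab => ⟨hab.1, hab.2⟩) (by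
      rintro a b ⟨xa, hxa, rfl⟩ ⟨xb, hxb, rfl⟩ hne
      rcases hMpw xa hxa xb hxb with h | h
      · exact absurd h hne
      · exact h) (M u) hcyc

end Ctx

end AffinePoset

namespace AffinePoset

namespace Ctx

variable {n : ℕ} (C : Ctx n)

lemma qv_subssh {X : Finset ℤ} (h : C.QV X) : ∃ k, X ⊆ sh (n := n) k C.σ := by
  rcases h with hX | ⟨a, rfl⟩
  · obtain ⟨τ₀, k, _, hτ₀σ, rfl⟩ := C.stepA hX
    exact ⟨k, (sh_subset_sh (n := n)).mpr hτ₀σ⟩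
  · refine ⟨C.lv a, ?_⟩
    intro x hx
    simp only [Finset.mem_singleton] at hx
    subst hx
    exact C.mem_sh_sigma_iff.mpr rfl

lemma q_lv_mono {U V : Finset ℤ} {kU kV : ℤ} (hQ : C.Q U V)
    (hU : U ⊆ sh (n := n) kU C.σ) (hV : V ⊆ sh (n := n) kV C.σ) : kU ≤ kV := by
  obtain ⟨_, _, _, a, ha, b, hb, hlt⟩ := hQ
  have h1 : C.lv a = kU := C.mem_sh_sigma_iff.mp (hU ha)
  have h2 : C.lv b = kV := C.mem_sh_sigma_iff.mp (hV hb)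
  have := C.lv_mono hlt.1
  omega

lemma tg_lv_mono {U V : Finset ℤ} {kU kV : ℤ} (h : Relation.TransGen C.Q U V)
    (hU : U ⊆ sh (n := n) kU C.σ) (hV : V ⊆ sh (n := n) kV C.σ) : kU ≤ kV := by
  have main : ∀ V', Relation.TransGen C.Q U V' → ∀ kV', V' ⊆ sh (n := n) kV' C.σ → kU ≤ kV' := by
    intro V' h'
    induction h' with
    | @single W e => intro kV' hV'; exact C.q_lv_mono e hU hV'
    | @tail W V'' h' e ih =>
        intro kV' hV'
        obtain ⟨kW, hW⟩ := C.qv_subssh e.1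
        have h1 := ih kW hW
        have h2 := C.q_lv_mono e hW hV'
        omega
  exact main V h kV hV

/-- no `Q`-path from `A` into a subset of `A` -/
lemma L2a {A B : Finset ℤ} (hQVA : C.QV A) (h : Relation.TransGen C.Q A B) (hBA : B ⊆ A) :
    False := by
  induction h with
  | single e =>
      obtain ⟨b, hb⟩ := C.qv_nonempty e.2.1
      exact e.2.2.1 b (hBA hb) hb
  | @tail W B' h e ih =>
      obtain ⟨b, hb⟩ := C.qv_nonempty e.2.1
      rcases C.lamin e.1 hQVA with hWA | hAW | hdis
      · exact ih hWA
      · exact e.2.2.1 b (hAW (hBA hb)) hb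
      · obtain ⟨_, _, _, p, hp, q, hq, hlt⟩ := id e
        have hq2 : C.Q W A := ⟨e.1, hQVA, hdis, p, hp, q, hBA hq, hlt⟩
        exact C.qacyc A (h.tail hq2)

/-- no `Q`-path from a subset of `B` to `B` -/
lemma L2b {A B : Finset ℤ} (hQVB : C.QV B) (h : Relation.TransGen C.Q A B) (hAB : A ⊆ B) :
    False := by
  have main : ∀ A', Relation.TransGen C.Q A' B → A' ⊆ B → False := by
    intro A' h'
    induction h' using Relation.TransGen.head_induction_on with
    | single e =>
        intro hAB'
        obtain ⟨a, ha⟩ := C.qv_nonempty e.1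
        exact e.2.2.1 a ha (hAB' ha)
    | head e htg ih =>
        intro hAB'
        rcases C.lamin e.2.1 hQVB with hwB | hBw | hdis
        · exact ih hwB
        · obtain ⟨a0, ha0⟩ := C.qv_nonempty e.1
          exact e.2.2.1 a0 ha0 (hBw (hAB' ha0))
        · obtain ⟨_, _, _, p, hp, q, hq, hlt⟩ := id e
          have hq2 : C.Q B _ := ⟨hQVB, e.2.1, hdis.symm, p, hAB' hp, q, hq, hlt⟩
          exact C.qacyc B (Relation.TransGen.head hq2 htg)
  exact main A h hAB

/-- transfer: a path into a subset of `D` gives a path into `D` -/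
lemma L3a {A B D : Finset ℤ} (hQVA : C.QV A) (hQVD : C.QV D)
    (h : Relation.TransGen C.Q A B) (hBD : B ⊆ D) (hAD : Dis A D) :
    Relation.TransGen C.Q A D := by
  induction h with
  | single e =>
      obtain ⟨_, _, _, p, hp, q, hq, hlt⟩ := id e
      exact Relation.TransGen.single ⟨hQVA, hQVD, hAD, p, hp, q, hBD hq, hlt⟩
  | @tail W B' h e ih =>
      rcases C.lamin e.1 hQVD with hWD | hDW | hdis
      · exact ih hWD
      · obtain ⟨b, hb⟩ := C.qv_nonempty e.2.1
        exact absurd (hDW (hBD hb)) (fun hmem => e.2.2.1 b hmem hb)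
      · obtain ⟨_, _, _, p, hp, q, hq, hlt⟩ := id e
        exact h.tail ⟨e.1, hQVD, hdis, p, hp, q, hBD hq, hlt⟩

/-- transfer: a path from a subset of `D` gives a path from `D` -/
lemma L3b {A B D : Finset ℤ} (hQVD : C.QV D)
    (h : Relation.TransGen C.Q A B) (hAD : A ⊆ D) (hDB : Dis D B) :
    Relation.TransGen C.Q D B := by
  have main : ∀ A', Relation.TransGen C.Q A' B → A' ⊆ D → Relation.TransGen C.Q D B := by
    intro A' h'
    induction h' using Relation.TransGen.head_induction_on with
    | single e =>
        intro hAD'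
        obtain ⟨_, _, _, p, hp, q, hq, hlt⟩ := id e
        exact Relation.TransGen.single ⟨hQVD, e.2.1, hDB, p, hAD' hp, q, hq, hlt⟩
    | head e htg ih =>
        intro hAD'
        rcases C.lamin e.2.1 hQVD with hcD | hDc | hdis
        · exact ih hcD
        · obtain ⟨a0, ha0⟩ := C.qv_nonempty e.1
          exact absurd (hDc (hAD' ha0)) (e.2.2.1 a0 ha0)
        · obtain ⟨_, _, _, p, hp, q, hq, hlt⟩ := id e
          exact Relation.TransGen.head ⟨hQVD, e.2.1, hdis.symm, p, hAD' hp, q, hq, hlt⟩ htg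
  exact main A h hAD

end Ctx

end AffinePoset

namespace AffinePoset

namespace Ctx

variable {n : ℕ} (C : Ctx n)

open Classical in
/-- candidates for the block of `a` inside `τ`: proper subtubes of `τ` containing `a` -/
noncomputable def cand (τ : Finset ℤ) (a : ℤ) : Finset (Finset ℤ) :=
  τ.powerset.filter (fun ρ => ρ ∈ C.T ∧ ρ ≠ τ ∧ a ∈ ρ)

lemma mem_cand {τ : Finset ℤ} {a : ℤ} {ρ : Finset ℤ} :
    ρ ∈ C.cand τ a ↔ ρ ⊆ τ ∧ ρ ∈ C.T ∧ ρ ≠ τ ∧ a ∈ ρ := by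
  unfold cand
  simp only [Finset.mem_filter, Finset.mem_powerset]

open Classical in
/-- the block of `a` inside `τ` -/
noncomputable def blk (τ : Finset ℤ) (a : ℤ) : Finset ℤ :=
  if h : (C.cand τ a).Nonempty then
    (Finset.exists_max_image (C.cand τ a) Finset.card h).choose
  else {a}

lemma blk_cases (τ : Finset ℤ) (a : ℤ) :
    (C.blk τ a = {a} ∧ ¬ (C.cand τ a).Nonempty) ∨
    (C.blk τ a ∈ C.cand τ a ∧ ∀ ρ ∈ C.cand τ a, ρ.card ≤ (C.blk τ a).card) := by
  unfold blk
  split_ifs with h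
  · right
    have spec := (Finset.exists_max_image (C.cand τ a) Finset.card h).choose_spec
    exact ⟨spec.1, spec.2⟩
  · left
    exact ⟨rfl, h⟩

lemma blk_mem_self {τ : Finset ℤ} {a : ℤ} : a ∈ C.blk τ a := by
  rcases C.blk_cases τ a with ⟨heq, _⟩ | ⟨hmem, _⟩
  · rw [heq]; exact Finset.mem_singleton_self a
  · exact (C.mem_cand.mp hmem).2.2.2

lemma blk_subset {τ : Finset ℤ} {a : ℤ} (ha : a ∈ τ) : C.blk τ a ⊆ τ := by
  rcases C.blk_cases τ a with ⟨heq, _⟩ | ⟨hmem, _⟩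
  · rw [heq]
    intro x hx
    simp only [Finset.mem_singleton] at hx
    rwa [hx]
  · exact (C.mem_cand.mp hmem).1

lemma blk_ne {τ : Finset ℤ} (hτT : τ ∈ C.T) {a : ℤ} : C.blk τ a ≠ τ := by
  rcases C.blk_cases τ a with ⟨heq, _⟩ | ⟨hmem, _⟩
  · rw [heq]
    intro habs
    have := (C.tubes hτT).2.2.1
    rw [← habs] at this
    simp at this
  · exact (C.mem_cand.mp hmem).2.2.1

lemma blk_qv {τ : Finset ℤ} {a : ℤ} : C.QV (C.blk τ a) := by
  rcases C.blk_cases τ a with ⟨heq, _⟩ | ⟨hmem, _⟩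
  · exact Or.inr ⟨a, heq⟩
  · exact Or.inl (C.mem_cand.mp hmem).2.1

lemma blk_max {τ : Finset ℤ} {a : ℤ} {ρ : Finset ℤ}
    (hρ : ρ ∈ C.cand τ a) : ρ ⊆ C.blk τ a := by
  rcases C.blk_cases τ a with ⟨_, hne⟩ | ⟨hmem, hmax⟩
  · exact absurd ⟨ρ, hρ⟩ hne
  · obtain ⟨hρτ, hρT, hρne, haρ⟩ := C.mem_cand.mp hρ
    obtain ⟨hBτ, hBT, hBne, haB⟩ := C.mem_cand.mp hmem
    rcases C.tricho hρT hBT with hs | hs | hdis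
    · exact hs
    · rw [Finset.eq_of_subset_of_card_le hs (hmax ρ hρ)]
    · exact absurd haB (hdis a haρ)

lemma blk_eq {τ : Finset ℤ} {a b : ℤ} (hb : b ∈ C.blk τ a) : C.blk τ b = C.blk τ a := by
  rcases C.blk_cases τ a with ⟨heq, _⟩ | ⟨hmem, _⟩
  · rw [heq] at hb
    simp only [Finset.mem_singleton] at hb
    rw [hb]
  · -- blk τ a is a tube candidate containing b
    obtain ⟨hBτ, hBT, hBne, haB⟩ := C.mem_cand.mp hmem
    have h1 : C.blk τ a ⊆ C.blk τ b :=
      C.blk_max (C.mem_cand.mpr ⟨hBτ, hBT, hBne, hb⟩)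
    -- so blk τ b is a tube candidate containing a
    have hbb : (C.cand τ b).Nonempty := ⟨_, C.mem_cand.mpr ⟨hBτ, hBT, hBne, hb⟩⟩
    rcases C.blk_cases τ b with ⟨_, hne⟩ | ⟨hmem', _⟩
    · exact absurd hbb hne
    · obtain ⟨hB'τ, hB'T, hB'ne, hbB'⟩ := C.mem_cand.mp hmem'
      have h2 : C.blk τ b ⊆ C.blk τ a :=
        C.blk_max (C.mem_cand.mpr ⟨hB'τ, hB'T, hB'ne, h1 haB⟩)
      exact subset_antisymm h2 h1

lemma blk_disj {τ : Finset ℤ} {a b : ℤ} (hne : C.blk τ a ≠ C.blk τ b) :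
    Dis (C.blk τ a) (C.blk τ b) := by
  intro x hxa hxb
  rw [← C.blk_eq hxa, C.blk_eq hxb] at hne
  exact hne rfl

/-- every proper subtube of `τ` in `T` lies in a block -/
lemma sub_in_blk {τ ρ : Finset ℤ} (hρT : ρ ∈ C.T) (hρτ : ρ ⊆ τ) (hρne : ρ ≠ τ)
    {a : ℤ} (ha : a ∈ ρ) : ρ ⊆ C.blk τ a :=
  C.blk_max (C.mem_cand.mpr ⟨hρτ, hρT, hρne, ha⟩)

/-- the set of blocks -/
noncomputable def blks (τ : Finset ℤ) : Finset (Finset ℤ) := τ.image (C.blk τ)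

lemma mem_blks {τ B : Finset ℤ} : B ∈ C.blks τ ↔ ∃ a ∈ τ, C.blk τ a = B := by
  unfold blks
  simp

lemma blks_nontriv {τ : Finset ℤ} (hτT : τ ∈ C.T) :
    ∃ a b, a ∈ τ ∧ b ∈ τ ∧ C.blk τ a ≠ C.blk τ b := by
  obtain ⟨a, ha⟩ := C.tube_nonempty hτT
  have hproper : C.blk τ a ⊂ τ := HasSubset.Subset.ssubset_of_ne (C.blk_subset ha) (C.blk_ne hτT)
  obtain ⟨b, hbτ, hbB⟩ := Finset.exists_of_ssubset hproper
  refine ⟨b, a, hbτ, ha, fun habs => hbB ?_⟩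
  rw [← habs]
  exact C.blk_mem_self

end Ctx

end AffinePoset

namespace AffinePoset

attribute [local instance 10] Classical.propDecidable

variable {n : ℕ} (P : AffinePoset n)

/-- minimal elements in finite sets -/
lemma exists_min_le (s : Finset ℤ) (hs : s.Nonempty) :
    ∃ m ∈ s, ∀ x ∈ s, P.le x m → x = m := by
  induction s using Finset.strongInduction with
  | _ s ih =>
      obtain ⟨a, ha⟩ := hs
      by_cases hmin : ∀ x ∈ s, P.le x a → x = a
      · exact ⟨a, ha, hmin⟩
      · push_neg at hmin
        obtain ⟨x, hx, hxa, hxne⟩ := hmin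
        have hss : s.erase a ⊂ s := Finset.erase_ssubset ha
        obtain ⟨m, hm, hmmin⟩ := ih (s.erase a) hss ⟨x, Finset.mem_erase.mpr ⟨hxne, hx⟩⟩
        refine ⟨m, (Finset.mem_erase.mp hm).2, ?_⟩
        intro y hy hym
        by_cases hya : y = a
        · subst hya
          exfalso
          -- a ≤ m would make a minimal-ish; instead: x ≤ a ≤ m, x ≠ a
          have hxm : P.le x m := P.le_trans _ _ _ hxa hym
          have hxm' := hmmin x (Finset.mem_erase.mpr ⟨hxne, hx⟩) hxm
          subst hxm'
          -- so x = m, and y = a with a ≤ m = x and x ≤ a gives x = a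
          exact hxne (P.le_antisymm _ _ hxa hym)
        · exact hmmin y (Finset.mem_erase.mpr ⟨hya, hy⟩) hym

/-- a cover step inside a convex finite set -/
lemma exists_cov_step {τ : Finset ℤ} (hconv : P.IsConvexIn τ) {a c : ℤ}
    (ha : a ∈ τ) (hc : c ∈ τ) (hlt : P.lt a c) :
    ∃ m ∈ τ, P.covby a m ∧ P.le m c := by
  set s : Finset ℤ := τ.filter (fun z => P.lt a z ∧ P.le z c) with hsdef
  have hcs : c ∈ s := Finset.mem_filter.mpr ⟨hc, hlt, P.le_refl c⟩
  obtain ⟨m, hm, hmin⟩ := P.exists_min_le s ⟨c, hcs⟩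
  obtain ⟨hmτ, ham, hmc⟩ := Finset.mem_filter.mp hm
  refine ⟨m, hmτ, ⟨ham, ?_⟩, hmc⟩
  rintro ⟨k, hak, hkm⟩
  have hkτ : k ∈ τ := hconv a ha m hmτ k hak.1 hkm.1
  have hks : k ∈ s := Finset.mem_filter.mpr ⟨hkτ, hak, P.le_trans _ _ _ hkm.1 hmc⟩
  exact hkm.2 (hmin k hks hkm.1)

namespace Ctx

variable {n : ℕ} (C : Ctx n)

/-- cover relation between blocks of `τ` -/
def Rblk (τ D D' : Finset ℤ) : Prop :=
  ∃ p q, p ∈ τ ∧ q ∈ τ ∧ C.blk τ p = D ∧ C.blk τ q = D' ∧ D ≠ D' ∧ C.P.covby p q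

/-- a strict relation inside a tube gives a chain of cover-related blocks -/
lemma blk_chain {τ : Finset ℤ} (hτT : τ ∈ C.T) :
    ∀ N : ℕ, ∀ a c, a ∈ τ → c ∈ τ → C.P.lt a c →
      (τ.filter (fun z => C.P.le a z ∧ C.P.le z c)).card ≤ N →
      Relation.ReflTransGen (C.Rblk τ) (C.blk τ a) (C.blk τ c) := by
  intro N
  induction N with
  | zero =>
      intro a c ha hc hlt hcard
      exfalso
      have : a ∈ τ.filter (fun z => C.P.le a z ∧ C.P.le z c) :=
        Finset.mem_filter.mpr ⟨ha, C.P.le_refl a, hlt.1⟩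
      have := Finset.card_pos.mpr ⟨a, this⟩
      omega
  | succ N ih =>
      intro a c ha hc hlt hcard
      obtain ⟨m, hmτ, hcov, hmc⟩ := C.P.exists_cov_step (C.tubes hτT).2.1 ha hc hlt
      by_cases hmceq : m = c
      · subst hmceq
        by_cases hbe : C.blk τ a = C.blk τ m
        · rw [hbe]
        · exact Relation.ReflTransGen.single ⟨a, m, ha, hmτ, rfl, rfl, hbe, hcov⟩
      · have hmc' : C.P.lt m c := ⟨hmc, hmceq⟩
        have hsub : τ.filter (fun z => C.P.le m z ∧ C.P.le z c) ⊂
            τ.filter (fun z => C.P.le a z ∧ C.P.le z c) := by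
          constructor
          · intro z hz
            obtain ⟨hzτ, h1, h2⟩ := Finset.mem_filter.mp hz
            exact Finset.mem_filter.mpr ⟨hzτ, C.P.le_trans _ _ _ hcov.1.1 h1, h2⟩
          · intro hcontra
            have haf : a ∈ τ.filter (fun z => C.P.le a z ∧ C.P.le z c) :=
              Finset.mem_filter.mpr ⟨ha, C.P.le_refl a, hlt.1⟩
            have := hcontra haf
            obtain ⟨_, hma, _⟩ := Finset.mem_filter.mp this
            exact hcov.1.2 (C.P.le_antisymm _ _ hcov.1.1 hma)
        have hcard' : (τ.filter (fun z => C.P.le m z ∧ C.P.le z c)).card ≤ N := by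
          have := Finset.card_lt_card hsub
          omega
        have hrec := ih m c hmτ hc hmc' hcard'
        by_cases hbe : C.blk τ a = C.blk τ m
        · rwa [hbe]
        · exact Relation.ReflTransGen.head ⟨a, m, ha, hmτ, rfl, rfl, hbe, hcov⟩ hrec

/-- Rblk implies Q -/
lemma rblk_q {τ D D' : Finset ℤ} (h : C.Rblk τ D D') : C.Q D D' := by
  obtain ⟨p, q, hpτ, hqτ, hpD, hqD, hne, hcov⟩ := h
  subst hpD; subst hqD
  exact ⟨C.blk_qv, C.blk_qv, C.blk_disj hne, p, C.blk_mem_self, q, C.blk_mem_self, hcov.1⟩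

end Ctx

end AffinePoset

namespace AffinePoset

attribute [local instance 10] Classical.propDecidable

namespace Ctx

variable {n : ℕ} (C : Ctx n)

/-- betweenness set for a pair -/
noncomputable def btw (B1 B2 : Finset ℤ) : Finset (Finset ℤ) :=
  C.σ.powerset.filter
    (fun X => C.QV X ∧ Relation.TransGen C.Q B1 X ∧ Relation.TransGen C.Q X B2)

lemma cross_step {τ : Finset ℤ} {a b : ℤ} (hb : b ∈ τ)
    (hconn : Relation.ReflTransGen
      (fun u v => u ∈ τ ∧ v ∈ τ ∧ (C.P.covby u v ∨ C.P.covby v u)) a b)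
    (ha : a ∈ τ) (hne : C.blk τ a ≠ C.blk τ b) :
    ∃ u v, u ∈ τ ∧ v ∈ τ ∧ (C.P.covby u v ∨ C.P.covby v u) ∧ C.blk τ u ≠ C.blk τ v := by
  induction hconn using Relation.ReflTransGen.head_induction_on with
  | refl => exact absurd rfl hne
  | head step rest ih =>
      rename_i a' c'
      by_cases heq : C.blk τ a' = C.blk τ c'
      · exact ih step.2.1 (by rwa [← heq])
      · exact ⟨a', c', step.1, step.2.1, step.2.2, heq⟩

theorem select {τ : Finset ℤ} (hτT : τ ∈ C.T) (hτσ : τ ⊆ C.σ)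
    (hnb : ∃ a b, a ∈ τ ∧ b ∈ τ ∧ C.blk τ a ≠ C.blk τ b) :
    ∃ B1 B2, (∃ a ∈ τ, C.blk τ a = B1) ∧ (∃ b ∈ τ, C.blk τ b = B2) ∧ B1 ≠ B2 ∧
      (∃ p q, p ∈ B1 ∧ q ∈ B2 ∧ C.P.covby p q) ∧
      (∀ X, C.QV X → Relation.TransGen C.Q B1 X → Relation.TransGen C.Q X B2 → False) := by
  classical
  obtain ⟨a, b, ha, hb, hneab⟩ := hnb
  obtain ⟨u, v, hu, hv, hcov, hneuv⟩ :=
    C.cross_step hb ((C.tubes hτT).1 a ha b hb) ha hneab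
  set PRS : Finset (Finset ℤ × Finset ℤ) :=
    ((C.blks τ) ×ˢ (C.blks τ)).filter (fun p => Relation.TransGen C.Q p.1 p.2) with hPRS
  have hPRSne : PRS.Nonempty := by
    rcases hcov with hc | hc
    · refine ⟨(C.blk τ u, C.blk τ v), Finset.mem_filter.mpr ⟨?_, ?_⟩⟩
      · exact Finset.mem_product.mpr ⟨C.mem_blks.mpr ⟨u, hu, rfl⟩, C.mem_blks.mpr ⟨v, hv, rfl⟩⟩
      · exact Relation.TransGen.single (C.rblk_q ⟨u, v, hu, hv, rfl, rfl, hneuv, hc⟩)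
    · refine ⟨(C.blk τ v, C.blk τ u), Finset.mem_filter.mpr ⟨?_, ?_⟩⟩
      · exact Finset.mem_product.mpr ⟨C.mem_blks.mpr ⟨v, hv, rfl⟩, C.mem_blks.mpr ⟨u, hu, rfl⟩⟩
      · exact Relation.TransGen.single (C.rblk_q ⟨v, u, hv, hu, rfl, rfl, hneuv.symm, hc⟩)
  obtain ⟨pr, hprmem, hprmin⟩ :=
    Finset.exists_min_image PRS (fun p => (C.btw p.1 p.2).card) hPRSne
  obtain ⟨hprod, hTG⟩ := Finset.mem_filter.mp hprmem
  set B1 := pr.1 with hB1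
  set B2 := pr.2 with hB2
  have hB1blk : ∃ a1 ∈ τ, C.blk τ a1 = B1 := C.mem_blks.mp (Finset.mem_product.mp hprod).1
  have hB2blk : ∃ a2 ∈ τ, C.blk τ a2 = B2 := C.mem_blks.mp (Finset.mem_product.mp hprod).2
  obtain ⟨a1, ha1, ha1B⟩ := hB1blk
  obtain ⟨a2, ha2, ha2B⟩ := hB2blk
  have hQV1 : C.QV B1 := ha1B ▸ C.blk_qv
  have hQV2 : C.QV B2 := ha2B ▸ C.blk_qv
  have hB1τ : B1 ⊆ τ := ha1B ▸ C.blk_subset ha1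
  have hB2τ : B2 ⊆ τ := ha2B ▸ C.blk_subset ha2
  have hne12 : B1 ≠ B2 := by
    rintro h
    rw [h] at hTG
    exact C.qacyc B2 hTG
  -- betweenness is empty
  have hbtwE : ∀ X, C.QV X → Relation.TransGen C.Q B1 X → Relation.TransGen C.Q X B2 → False := by
    intro X hQX h1 h2
    have hB1σ0 : B1 ⊆ sh (n := n) 0 C.σ := by rw [sh_zero]; exact hB1τ.trans hτσ
    have hB2σ0 : B2 ⊆ sh (n := n) 0 C.σ := by rw [sh_zero]; exact hB2τ.trans hτσ
    obtain ⟨k, hXk⟩ := C.qv_subssh hQX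
    have hk1 : (0:ℤ) ≤ k := C.tg_lv_mono h1 hB1σ0 hXk
    have hk2 : k ≤ 0 := C.tg_lv_mono h2 hXk hB2σ0
    have hk0 : k = 0 := by omega
    subst hk0
    rw [sh_zero] at hXk
    by_cases hXτ : X = τ
    · subst hXτ
      exact C.L2b hQX h1 (hB1τ)
    rcases C.lamin hQX (Or.inl hτT) with hsub | hsup | hdis
    · -- X inside τ
      obtain ⟨x0, hx0⟩ := C.qv_nonempty hQX
      have hx0τ : x0 ∈ τ := hsub hx0
      have hXD : X ⊆ C.blk τ x0 := by
        rcases hQX with hXT | ⟨x, rfl⟩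
        · exact C.sub_in_blk hXT hsub hXτ hx0
        · intro y hy
          simp only [Finset.mem_singleton] at hy hx0
          rw [hy, hx0]
          exact C.blk_mem_self
      set D := C.blk τ x0 with hD
      by_cases hD1 : D = B1
      · exact C.L2a hQV1 h1 (hD1 ▸ hXD)
      by_cases hD2 : D = B2
      · exact C.L2b hQV2 h2 (hD2 ▸ hXD)
      have hQVD : C.QV D := C.blk_qv
      have hdis1 : Dis B1 D := by
        rw [← ha1B, hD]
        exact C.blk_disj (by rw [ha1B, ← hD]; exact fun hh => hD1 hh.symm)
      have hdis2 : Dis D B2 := by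
        rw [← ha2B, hD]
        exact C.blk_disj (by rw [ha2B, ← hD]; exact hD2)
      have hBD1 : Relation.TransGen C.Q B1 D := C.L3a hQV1 hQVD h1 hXD hdis1
      have hDB2 : Relation.TransGen C.Q D B2 := C.L3b hQVD h2 hXD hdis2
      have hpair' : (B1, D) ∈ PRS := by
        refine Finset.mem_filter.mpr ⟨Finset.mem_product.mpr ⟨?_, ?_⟩, hBD1⟩
        · exact (Finset.mem_product.mp hprod).1
        · exact C.mem_blks.mpr ⟨x0, hx0τ, rfl⟩
      have hDbtw : D ∈ C.btw B1 B2 := by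
        refine Finset.mem_filter.mpr ⟨?_, hQVD, hBD1, hDB2⟩
        exact Finset.mem_powerset.mpr ((C.blk_subset hx0τ).trans hτσ)
      have hsubbtw : C.btw B1 D ⊆ C.btw B1 B2 := by
        intro Y hY
        obtain ⟨hYσ, hYQV, hY1, hY2⟩ := Finset.mem_filter.mp hY
        exact Finset.mem_filter.mpr ⟨hYσ, hYQV, hY1, hY2.trans hDB2⟩
      have hDnot : D ∉ C.btw B1 D := by
        intro hcon
        obtain ⟨_, _, _, hcy⟩ := Finset.mem_filter.mp hcon
        exact C.qacyc D hcy
      have hlt : (C.btw B1 D).card < (C.btw B1 B2).card :=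
        Finset.card_lt_card ⟨hsubbtw, fun hcontra => hDnot (hcontra hDbtw)⟩
      have := hprmin (B1, D) hpair'
      simp only at this
      omega
    · -- τ strictly inside X
      exact C.L2b hQX h1 (hB1τ.trans hsup)
    · -- X disjoint from τ
      have h3 : Relation.TransGen C.Q τ X := C.L3b (Or.inl hτT) h1 hB1τ hdis.symm
      have h4 : Relation.TransGen C.Q X τ := C.L3a hQX (Or.inl hτT) h2 hB2τ hdis
      exact C.qacyc τ (h3.trans h4)
  -- hence a direct edge
  have hedge : C.Q B1 B2 := by
    cases hTG with
    | single e => exact e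
    | tail h' e =>
        exact absurd (hbtwE _ e.1 h' (Relation.TransGen.single e)) not_false
  -- hence a cover pair between the two blocks
  obtain ⟨_, _, _, c, hc, c', hc', hltcc⟩ := id hedge
  have hcτ : c ∈ τ := hB1τ hc
  have hc'τ : c' ∈ τ := hB2τ hc'
  have hcB1 : C.blk τ c = B1 := by
    rw [← ha1B]
    exact C.blk_eq (ha1B ▸ hc)
  have hc'B2 : C.blk τ c' = B2 := by
    rw [← ha2B]
    exact C.blk_eq (ha2B ▸ hc')
  have hchain := C.blk_chain hτT (τ.filter (fun z => C.P.le c z ∧ C.P.le z c')).card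
    c c' hcτ hc'τ hltcc le_rfl
  rw [hcB1, hc'B2] at hchain
  rcases Relation.ReflTransGen.cases_head hchain with heq | ⟨D, hstep, hrest⟩
  · exact absurd heq hne12
  · by_cases hDB2 : D = B2
    · subst hDB2
      obtain ⟨p, q, hpτ, hqτ, hpB, hqB, hneB, hcovpq⟩ := hstep
      refine ⟨B1, B2, ⟨a1, ha1, ha1B⟩, ⟨a2, ha2, ha2B⟩, hne12, ⟨p, q, ?_, ?_, hcovpq⟩, hbtwE⟩
      · rw [← hpB]; exact C.blk_mem_self
      · rw [← hqB]; exact C.blk_mem_self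
    · exfalso
      have hQVD : C.QV D := by
        obtain ⟨p, q, hpτ, hqτ, hpB, hqB, hneB, hcovpq⟩ := hstep
        rw [← hqB]
        exact C.blk_qv
      have hTG1 : Relation.TransGen C.Q B1 D := Relation.TransGen.single (C.rblk_q hstep)
      have hrestQ : Relation.ReflTransGen C.Q D B2 :=
        Relation.ReflTransGen.mono (fun a b h => C.rblk_q h) _ _ hrest
      have hTG2 : Relation.TransGen C.Q D B2 := by
        rcases Relation.reflTransGen_iff_eq_or_transGen.mp hrestQ with h | h
        · exact absurd h.symm hDB2
        · exact h
      exact hbtwE D hQVD hTG1 hTG2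

end Ctx

end AffinePoset

namespace AffinePoset

attribute [local instance 10] Classical.propDecidable

namespace Ctx

variable {n : ℕ} (C : Ctx n)

lemma sh_dis {X Y : Finset ℤ} (k : ℤ) (h : Dis X Y) : Dis (sh (n := n) k X) (sh (n := n) k Y) := by
  intro x hx hy
  rw [mem_sh] at hx hy
  exact h _ hx hy

lemma sh_sigma_dis {k k' : ℤ} (hkk : k ≠ k') : Dis (sh (n := n) k C.σ) (sh (n := n) k' C.σ) := by
  intro x hx hy
  rw [C.mem_sh_sigma_iff] at hx hy
  omega

section BC

variable {τ B1 B2 : Finset ℤ} {a1 a2 : ℤ}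

/-- the merged tube -/
lemma mu_tube
    (hτT : τ ∈ C.T) (ha1 : a1 ∈ τ) (hB1 : C.blk τ a1 = B1) (ha2 : a2 ∈ τ)
    (hB2 : C.blk τ a2 = B2) (hne12 : B1 ≠ B2)
    (hcov : ∃ p q, p ∈ B1 ∧ q ∈ B2 ∧ C.P.covby p q)
    (hbtwE : ∀ X, C.QV X → Relation.TransGen C.Q B1 X → Relation.TransGen C.Q X B2 → False) :
    C.P.IsTube (B1 ∪ B2) := by
  have hQV1 : C.QV B1 := hB1 ▸ C.blk_qv
  have hQV2 : C.QV B2 := hB2 ▸ C.blk_qv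
  have hB1τ : B1 ⊆ τ := hB1 ▸ C.blk_subset ha1
  have hB2τ : B2 ⊆ τ := hB2 ▸ C.blk_subset ha2
  have hdis12 : Dis B1 B2 := by
    rw [← hB1, ← hB2]
    exact C.blk_disj (by rw [hB1, hB2]; exact hne12)
  have hedge : C.Q B1 B2 := by
    obtain ⟨p, q, hp, hq, hpq⟩ := hcov
    exact ⟨hQV1, hQV2, hdis12, p, hp, q, hq, hpq.1⟩
  have hμτ : B1 ∪ B2 ⊆ τ := Finset.union_subset hB1τ hB2τ
  refine ⟨?_, ?_, ?_, ?_⟩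
  · -- connected
    obtain ⟨p, q, hp, hq, hpq⟩ := hcov
    have hconn : ∀ (B : Finset ℤ), C.QV B → B ⊆ B1 ∪ B2 → ∀ a ∈ B, ∀ b ∈ B,
        Relation.ReflTransGen
          (fun u v => u ∈ B1 ∪ B2 ∧ v ∈ B1 ∪ B2 ∧ (C.P.covby u v ∨ C.P.covby v u)) a b := by
      intro B hQV hBμ a ha b hb
      rcases hQV with hBT | ⟨x, rfl⟩
      · have := (C.tubes hBT).1 a ha b hb
        exact Relation.ReflTransGen.mono
          (fun u v huv => ⟨hBμ huv.1, hBμ huv.2.1, huv.2.2⟩) _ _ this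
      · simp only [Finset.mem_singleton] at ha hb
        rw [ha, hb]
    intro a ha b hb
    have hstep : Relation.ReflTransGen
        (fun u v => u ∈ B1 ∪ B2 ∧ v ∈ B1 ∪ B2 ∧ (C.P.covby u v ∨ C.P.covby v u)) p q :=
      Relation.ReflTransGen.single
        ⟨Finset.mem_union_left _ hp, Finset.mem_union_right _ hq, Or.inl hpq⟩
    have hsub1 : B1 ⊆ B1 ∪ B2 := Finset.subset_union_left
    have hsub2 : B2 ⊆ B1 ∪ B2 := Finset.subset_union_right
    rcases Finset.mem_union.mp ha with ha' | ha' <;> rcases Finset.mem_union.mp hb with hb' | hb'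
    · exact hconn B1 hQV1 hsub1 a ha' b hb'
    · exact ((hconn B1 hQV1 hsub1 a ha' p hp).trans hstep).trans (hconn B2 hQV2 hsub2 q hq b hb')
    · have hstep' : Relation.ReflTransGen
          (fun u v => u ∈ B1 ∪ B2 ∧ v ∈ B1 ∪ B2 ∧ (C.P.covby u v ∨ C.P.covby v u)) q p :=
        Relation.ReflTransGen.single
          ⟨Finset.mem_union_right _ hq, Finset.mem_union_left _ hp, Or.inr hpq⟩
      exact ((hconn B2 hQV2 hsub2 a ha' q hq).trans hstep').trans
        (hconn B1 hQV1 hsub1 p hp b hb')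
    · exact hconn B2 hQV2 hsub2 a ha' b hb'
  · -- convex
    intro a ha c hc b hab hbc
    by_cases hbμ : b ∈ B1 ∪ B2
    · exact hbμ
    exfalso
    have hμconv := (C.tubes hτT).2.1
    have hbτ : b ∈ τ := hμconv a (hμτ ha) c (hμτ hc) b hab hbc
    have hba : b ≠ a := by rintro rfl; exact hbμ ha
    have hbc' : b ≠ c := by rintro rfl; exact hbμ hc
    have hQVb : C.QV {b} := Or.inr ⟨b, rfl⟩
    have hbB1 : b ∉ B1 := fun h => hbμ (Finset.mem_union_left _ h)
    have hbB2 : b ∉ B2 := fun h => hbμ (Finset.mem_union_right _ h)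
    rcases Finset.mem_union.mp ha with ha' | ha' <;> rcases Finset.mem_union.mp hc with hc' | hc'
    · -- a, c ∈ B1
      exact hbB1 (C.qv_convex hQV1 a ha' c hc' b hab hbc)
    · -- a ∈ B1, c ∈ B2: b strictly between
      have hQ1 : C.Q B1 {b} := ⟨hQV1, hQVb, fun x hx hxb => by
          simp only [Finset.mem_singleton] at hxb; exact hbB1 (hxb ▸ hx),
        a, ha', b, Finset.mem_singleton_self b, ⟨hab, fun h => hba h.symm⟩⟩
      have hQ2 : C.Q {b} B2 := ⟨hQVb, hQV2, fun x hx hxB => by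
          simp only [Finset.mem_singleton] at hx; exact hbB2 (hx ▸ hxB),
        b, Finset.mem_singleton_self b, c, hc', ⟨hbc, hbc'⟩⟩
      exact hbtwE {b} hQVb (Relation.TransGen.single hQ1) (Relation.TransGen.single hQ2)
    · -- a ∈ B2, c ∈ B1: cycle B1 → B2 → {b} → B1
      have hQ1 : C.Q B2 {b} := ⟨hQV2, hQVb, fun x hx hxb => by
          simp only [Finset.mem_singleton] at hxb; exact hbB2 (hxb ▸ hx),
        a, ha', b, Finset.mem_singleton_self b, ⟨hab, fun h => hba h.symm⟩⟩
      have hQ2 : C.Q {b} B1 := ⟨hQVb, hQV1, fun x hx hxB => by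
          simp only [Finset.mem_singleton] at hx; exact hbB1 (hx ▸ hxB),
        b, Finset.mem_singleton_self b, c, hc', ⟨hbc, hbc'⟩⟩
      exact C.qacyc B1
        (((Relation.TransGen.single hedge).tail hQ1).tail hQ2)
    · -- a, c ∈ B2
      exact hbB2 (C.qv_convex hQV2 a ha' c hc' b hab hbc)
  · -- card
    obtain ⟨x, hx⟩ := C.qv_nonempty hQV1
    obtain ⟨y, hy⟩ := C.qv_nonempty hQV2
    have hxy : x ≠ y := fun h => hdis12 x hx (h ▸ hy)
    exact Finset.one_lt_card.mpr ⟨x, Finset.mem_union_left _ hx, y,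
      Finset.mem_union_right _ hy, hxy⟩
  · -- residues
    intro i hi j hj hij
    exact (C.tubes hτT).2.2.2 i (hμτ hi) j (hμτ hj) hij

/-- trichotomy of μ against members of T -/
lemma mu_tricho
    (hτT : τ ∈ C.T) (ha1 : a1 ∈ τ) (hB1 : C.blk τ a1 = B1) (ha2 : a2 ∈ τ)
    (hB2 : C.blk τ a2 = B2) (hne12 : B1 ≠ B2)
    {ρ : Finset ℤ} (hρT : ρ ∈ C.T) :
    B1 ∪ B2 ⊆ ρ ∨ ρ ⊆ B1 ∪ B2 ∨ Dis (B1 ∪ B2) ρ := by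
  have hB1τ : B1 ⊆ τ := hB1 ▸ C.blk_subset ha1
  have hB2τ : B2 ⊆ τ := hB2 ▸ C.blk_subset ha2
  have hμτ : B1 ∪ B2 ⊆ τ := Finset.union_subset hB1τ hB2τ
  rcases C.tricho hρT hτT with hρτ | hτρ | hdis
  · -- ρ ⊆ τ
    by_cases hρeq : ρ = τ
    · exact Or.inl (hρeq ▸ hμτ)
    · obtain ⟨r0, hr0⟩ := C.tube_nonempty hρT
      have hρD : ρ ⊆ C.blk τ r0 := C.sub_in_blk hρT hρτ hρeq hr0
      by_cases hD1 : C.blk τ r0 = B1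
      · exact Or.inr (Or.inl ((hD1 ▸ hρD).trans Finset.subset_union_left))
      by_cases hD2 : C.blk τ r0 = B2
      · exact Or.inr (Or.inl ((hD2 ▸ hρD).trans Finset.subset_union_right))
      · refine Or.inr (Or.inr ?_)
        intro x hx hxρ
        have hxD : x ∈ C.blk τ r0 := hρD hxρ
        rcases Finset.mem_union.mp hx with hx1 | hx2
        · exact C.blk_disj (a := a1) (b := r0) (by rw [hB1]; exact fun h => hD1 h.symm)
            x (hB1 ▸ hx1) hxD
        · exact C.blk_disj (a := a2) (b := r0) (by rw [hB2]; exact fun h => hD2 h.symm)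
            x (hB2 ▸ hx2) hxD
  · exact Or.inl (hμτ.trans hτρ)
  · refine Or.inr (Or.inr ?_)
    intro x hx hxρ
    exact hdis x hxρ (hμτ hx)

end BC

end Ctx

end AffinePoset

namespace AffinePoset

attribute [local instance 10] Classical.propDecidable

namespace Ctx

variable {n : ℕ} (C : Ctx n)

lemma image_eq_sh (k : ℤ) (t : Finset ℤ) : Finset.image (· + k * (n : ℤ)) t = sh (n := n) k t := rfl

lemma dis_mono {X X' Y Y' : Finset ℤ} (hX : X ⊆ X') (hY : Y ⊆ Y') (h : Dis X' Y') : Dis X Y :=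
  fun x hx hy => h x (hX hx) (hY hy)

lemma tubingRel_sh {T0 : Set (Finset ℤ)} (hcl : ∀ ρ ∈ T0, ∀ k : ℤ, sh (n := n) k ρ ∈ T0)
    (k : ℤ) {a b : Finset ℤ} (h : C.P.TubingRel T0 a b) :
    C.P.TubingRel T0 (sh (n := n) k a) (sh (n := n) k b) := by
  obtain ⟨haT, hbT, hdis, x, hx, y, hy, hlt⟩ := h
  exact ⟨hcl a haT k, hcl b hbT k, sh_dis (n := n) k hdis, x + k * n, mem_sh' hx, y + k * n,
    mem_sh' hy, (C.P.lt_shift_k k x y).mpr hlt⟩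

section BC

variable {τ B1 B2 : Finset ℤ} {a1 a2 : ℤ}

/-- the extended tubing -/
def Text (B1 B2 : Finset ℤ) : Set (Finset ℤ) :=
  C.T ∪ {X | ∃ k : ℤ, X = sh (n := n) k (B1 ∪ B2)}

lemma text_closed : ∀ ρ ∈ C.Text B1 B2, ∀ k : ℤ, sh (n := n) k ρ ∈ C.Text B1 B2 := by
  rintro ρ (hρ | ⟨k', rfl⟩) k
  · exact Or.inl (C.shiftmem hρ k)
  · exact Or.inr ⟨k + k', (sh_sh k k' _)⟩

lemma text_subssh (hτσ : τ ⊆ C.σ) (ha1 : a1 ∈ τ) (hB1 : C.blk τ a1 = B1) (ha2 : a2 ∈ τ)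
    (hB2 : C.blk τ a2 = B2) :
    ∀ ρ ∈ C.Text B1 B2, ∃ k, ρ ⊆ sh (n := n) k C.σ := by
  have hμσ : B1 ∪ B2 ⊆ C.σ := by
    apply Finset.union_subset
    · exact (hB1 ▸ C.blk_subset ha1).trans hτσ
    · exact (hB2 ▸ C.blk_subset ha2).trans hτσ
  rintro ρ (hρ | ⟨k, rfl⟩)
  · obtain ⟨ρ₀, k, _, hρσ, rfl⟩ := C.stepA hρ
    exact ⟨k, (sh_subset_sh (n := n)).mpr hρσ⟩
  · exact ⟨k, (sh_subset_sh (n := n)).mpr hμσ⟩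

lemma text_lv_unique {ρ : Finset ℤ} (hne : ρ.Nonempty) {k k' : ℤ}
    (h1 : ρ ⊆ sh (n := n) k C.σ) (h2 : ρ ⊆ sh (n := n) k' C.σ) : k = k' := by
  obtain ⟨x, hx⟩ := hne
  have e1 := C.mem_sh_sigma_iff.mp (h1 hx)
  have e2 := C.mem_sh_sigma_iff.mp (h2 hx)
  omega

lemma rel_lv_mono {a b : Finset ℤ} {T0 : Set (Finset ℤ)} (h : C.P.TubingRel T0 a b)
    {k k' : ℤ} (ha : a ⊆ sh (n := n) k C.σ) (hb : b ⊆ sh (n := n) k' C.σ) : k ≤ k' := by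
  obtain ⟨_, _, _, x, hx, y, hy, hlt⟩ := h
  have e1 := C.mem_sh_sigma_iff.mp (ha hx)
  have e2 := C.mem_sh_sigma_iff.mp (hb hy)
  have := C.lv_mono hlt.1
  omega

lemma text_tube
    (hτT : τ ∈ C.T) (ha1 : a1 ∈ τ) (hB1 : C.blk τ a1 = B1) (ha2 : a2 ∈ τ)
    (hB2 : C.blk τ a2 = B2) (hne12 : B1 ≠ B2)
    (hcov : ∃ p q, p ∈ B1 ∧ q ∈ B2 ∧ C.P.covby p q)
    (hbtwE : ∀ X, C.QV X → Relation.TransGen C.Q B1 X → Relation.TransGen C.Q X B2 → False) :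
    ∀ ρ ∈ C.Text B1 B2, C.P.IsTube ρ := by
  rintro ρ (hρ | ⟨k, rfl⟩)
  · exact C.tubes hρ
  · exact C.P.isTube_sh k (C.mu_tube hτT ha1 hB1 ha2 hB2 hne12 hcov hbtwE)

lemma text_tricho
    (hτT : τ ∈ C.T) (hτσ : τ ⊆ C.σ) (ha1 : a1 ∈ τ) (hB1 : C.blk τ a1 = B1) (ha2 : a2 ∈ τ)
    (hB2 : C.blk τ a2 = B2) (hne12 : B1 ≠ B2) :
    ∀ ρ ∈ C.Text B1 B2, ∀ ρ' ∈ C.Text B1 B2, ρ ⊆ ρ' ∨ ρ' ⊆ ρ ∨ ∀ x ∈ ρ, x ∉ ρ' := by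
  have hμσ : B1 ∪ B2 ⊆ C.σ := by
    apply Finset.union_subset
    · exact (hB1 ▸ C.blk_subset ha1).trans hτσ
    · exact (hB2 ▸ C.blk_subset ha2).trans hτσ
  -- core: μ against a tube of T
  have core : ∀ ρ ∈ C.T, ∀ k : ℤ, sh (n := n) k (B1 ∪ B2) ⊆ ρ ∨ ρ ⊆ sh (n := n) k (B1 ∪ B2) ∨
      Dis (sh (n := n) k (B1 ∪ B2)) ρ := by
    intro ρ hρ k
    have hρ' : sh (n := n) (-k) ρ ∈ C.T := C.shiftmem hρ (-k)
    have hback : sh (n := n) k (sh (n := n) (-k) ρ) = ρ := by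
      rw [sh_sh]
      simp [sh_zero]
    rcases C.mu_tricho hτT ha1 hB1 ha2 hB2 hne12 hρ' with hs | hs | hs
    · left
      have := (sh_subset_sh (n := n) (k := k)).mpr hs
      rwa [hback] at this
    · right; left
      have := (sh_subset_sh (n := n) (k := k)).mpr hs
      rwa [hback] at this
    · right; right
      have := sh_dis (n := n) k hs
      rwa [hback] at this
  rintro ρ (hρ | ⟨k, rfl⟩) ρ' (hρ' | ⟨k', rfl⟩)
  · exact C.tricho hρ hρ'
  · rcases core ρ hρ k' with hs | hs | hs
    · exact Or.inr (Or.inl hs)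
    · exact Or.inl hs
    · exact Or.inr (Or.inr (fun x hx hx' => hs x hx' hx))
  · rcases core ρ' hρ' k with hs | hs | hs
    · exact Or.inl hs
    · exact Or.inr (Or.inl hs)
    · exact Or.inr (Or.inr hs)
  · by_cases hkk : k = k'
    · subst hkk; exact Or.inl subset_rfl
    · refine Or.inr (Or.inr ?_)
      exact dis_mono ((sh_subset_sh (n := n)).mpr hμσ) ((sh_subset_sh (n := n)).mpr hμσ)
        (C.sh_sigma_dis hkk)

end BC

end Ctx

end AffinePoset

namespace AffinePoset

attribute [local instance 10] Classical.propDecidable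

namespace Ctx

variable {n : ℕ} (C : Ctx n)

section BC

variable {τ B1 B2 : Finset ℤ} {a1 a2 : ℤ}

lemma text_rtg_lv (hτσ : τ ⊆ C.σ) (ha1 : a1 ∈ τ) (hB1 : C.blk τ a1 = B1) (ha2 : a2 ∈ τ)
    (hB2 : C.blk τ a2 = B2) {a b : Finset ℤ} {k k' : ℤ} (hane : a.Nonempty)
    (h : Relation.ReflTransGen (C.P.TubingRel (C.Text B1 B2)) a b)
    (ha : a ⊆ sh (n := n) k C.σ) (hb : b ⊆ sh (n := n) k' C.σ) : k ≤ k' := by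
  have main : ∀ b', Relation.ReflTransGen (C.P.TubingRel (C.Text B1 B2)) a b' →
      ∀ k'', b' ⊆ sh (n := n) k'' C.σ → k ≤ k'' := by
    intro b' h'
    induction h' with
    | refl =>
        intro k'' hb'
        exact le_of_eq (C.text_lv_unique hane ha hb')
    | @tail W V h' e ih =>
        intro k'' hb'
        obtain ⟨kW, hW⟩ := C.text_subssh hτσ ha1 hB1 ha2 hB2 W e.1
        have h1 := ih kW hW
        have h2 := C.rel_lv_mono e hW hb'
        omega
  exact main b h k' hb

lemma text_tg_lv (hτσ : τ ⊆ C.σ) (ha1 : a1 ∈ τ) (hB1 : C.blk τ a1 = B1) (ha2 : a2 ∈ τ)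
    (hB2 : C.blk τ a2 = B2) {a b : Finset ℤ} {k k' : ℤ} (hane : a.Nonempty)
    (h : Relation.TransGen (C.P.TubingRel (C.Text B1 B2)) a b)
    (ha : a ⊆ sh (n := n) k C.σ) (hb : b ⊆ sh (n := n) k' C.σ) : k ≤ k' :=
  C.text_rtg_lv hτσ ha1 hB1 ha2 hB2 hane h.to_reflTransGen ha hb

/-- the machine: no cycle in the extended tubing based at a level-0 tube of T -/
lemma text_acyc_base
    (hτT : τ ∈ C.T) (hτσ : τ ⊆ C.σ) (ha1 : a1 ∈ τ) (hB1 : C.blk τ a1 = B1) (ha2 : a2 ∈ τ)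
    (hB2 : C.blk τ a2 = B2) (hne12 : B1 ≠ B2)
    (hcov : ∃ p q, p ∈ B1 ∧ q ∈ B2 ∧ C.P.covby p q)
    (hbtwE : ∀ X, C.QV X → Relation.TransGen C.Q B1 X → Relation.TransGen C.Q X B2 → False)
    (hμnT : (B1 ∪ B2) ∉ C.T)
    {ρs : Finset ℤ} (hρT : ρs ∈ C.T) (hρσ : ρs ⊆ C.σ) :
    ¬ Relation.TransGen (C.P.TubingRel (C.Text B1 B2)) ρs ρs := by
  intro hcyc
  have hQV1 : C.QV B1 := hB1 ▸ C.blk_qv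
  have hQV2 : C.QV B2 := hB2 ▸ C.blk_qv
  have hB1τ : B1 ⊆ τ := hB1 ▸ C.blk_subset ha1
  have hB2τ : B2 ⊆ τ := hB2 ▸ C.blk_subset ha2
  have hμσ : B1 ∪ B2 ⊆ C.σ :=
    Finset.union_subset (hB1τ.trans hτσ) (hB2τ.trans hτσ)
  have hdis12 : Dis B1 B2 := by
    rw [← hB1, ← hB2]
    exact C.blk_disj (by rw [hB1, hB2]; exact hne12)
  have hedge : C.Q B1 B2 := by
    obtain ⟨p, q, hp, hq, hpq⟩ := hcov
    exact ⟨hQV1, hQV2, hdis12, p, hp, q, hq, hpq.1⟩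
  have hμne : (B1 ∪ B2).Nonempty := by
    obtain ⟨x, hx⟩ := C.qv_nonempty hQV1
    exact ⟨x, Finset.mem_union_left _ hx⟩
  have hρσ0 : ρs ⊆ sh (n := n) 0 C.σ := by rwa [sh_zero]
  have pin : ∀ V, Relation.TransGen (C.P.TubingRel (C.Text B1 B2)) ρs V →
      Relation.ReflTransGen (C.P.TubingRel (C.Text B1 B2)) V ρs →
      V ⊆ C.σ ∧ ((V ∈ C.T ∧ V ≠ B1 ∪ B2) ∨ V = B1 ∪ B2) := by
    intro V hpre hsuf
    have hVT' : V ∈ C.Text B1 B2 := by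
      cases hpre with
      | single e => exact e.2.1
      | tail h e => exact e.2.1
    obtain ⟨k, hVk⟩ := C.text_subssh hτσ ha1 hB1 ha2 hB2 V hVT'
    have hVne : V.Nonempty := by
      rcases hVT' with hVT | ⟨k', rfl⟩
      · exact C.tube_nonempty hVT
      · exact sh_nonempty hμne
    have h1 : (0:ℤ) ≤ k :=
      C.text_tg_lv hτσ ha1 hB1 ha2 hB2 (C.tube_nonempty hρT) hpre hρσ0 hVk
    have h2 : k ≤ 0 := C.text_rtg_lv hτσ ha1 hB1 ha2 hB2 hVne hsuf hVk hρσ0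
    have hk0 : k = 0 := by omega
    subst hk0
    rw [sh_zero] at hVk
    refine ⟨hVk, ?_⟩
    rcases hVT' with hVT | ⟨k', rfl⟩
    · exact Or.inl ⟨hVT, fun h => hμnT (h ▸ hVT)⟩
    · right
      have hsub0 : sh (n := n) k' (B1 ∪ B2) ⊆ sh (n := n) 0 C.σ := by
        rw [sh_zero]; exact hVk
      have hk' : k' = 0 := C.text_lv_unique (sh_nonempty hμne)
        ((sh_subset_sh (n := n)).mpr hμσ) hsub0
      rw [hk', sh_zero]
  -- main machine
  have main : ∀ V, Relation.TransGen (C.P.TubingRel (C.Text B1 B2)) ρs V →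
      Relation.ReflTransGen (C.P.TubingRel (C.Text B1 B2)) V ρs →
      ∃ w, ((V ∈ C.T ∧ w = V) ∨ (V = B1 ∪ B2 ∧ (w = B1 ∨ w = B2))) ∧
        (Relation.TransGen C.Q ρs w ∨
         (Relation.TransGen C.Q ρs B2 ∧
           ∃ x2, x2 ∈ C.T ∧ x2 ≠ B2 ∧ C.Q B1 x2 ∧ Relation.ReflTransGen C.Q x2 w)) := by
    intro V h
    induction h with
    | @single V e =>
        intro hsuf
        obtain ⟨hVσ, hVshape⟩ := pin V (Relation.TransGen.single e) hsuf
        obtain ⟨_, _, hdis, x, hx, y, hy, hlt⟩ := id e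
        rcases hVshape with ⟨hVT, _⟩ | hVμ
        · exact ⟨V, Or.inl ⟨hVT, rfl⟩, Or.inl (Relation.TransGen.single
            ⟨Or.inl hρT, Or.inl hVT, hdis, x, hx, y, hy, hlt⟩)⟩
        · subst hVμ
          by_cases hyB : y ∈ B1
          · exact ⟨B1, Or.inr ⟨rfl, Or.inl rfl⟩, Or.inl (Relation.TransGen.single
              ⟨Or.inl hρT, hQV1, dis_mono subset_rfl Finset.subset_union_left hdis,
                x, hx, y, hyB, hlt⟩)⟩
          · have hyB2 : y ∈ B2 := (Finset.mem_union.mp hy).resolve_left hyB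
            exact ⟨B2, Or.inr ⟨rfl, Or.inr rfl⟩, Or.inl (Relation.TransGen.single
              ⟨Or.inl hρT, hQV2, dis_mono subset_rfl Finset.subset_union_right hdis,
                x, hx, y, hyB2, hlt⟩)⟩
    | @tail V V' h e ih =>
        intro hsuf
        have hsufV : Relation.ReflTransGen (C.P.TubingRel (C.Text B1 B2)) V ρs :=
          Relation.ReflTransGen.head e hsuf
        obtain ⟨w, hwrep, hst⟩ := ih hsufV
        obtain ⟨hVσ, hVshape⟩ := pin V h hsufV
        obtain ⟨hV'σ, hV'shape⟩ := pin V' (h.tail e) hsuf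
        obtain ⟨_, _, hdis, x, hx, y, hy, hlt⟩ := id e
        -- step builder
        have step : ∀ u, C.QV u → u ⊆ V → x ∈ u →
            ∃ w', ((V' ∈ C.T ∧ w' = V') ∨ (V' = B1 ∪ B2 ∧ (w' = B1 ∨ w' = B2))) ∧ C.Q u w' := by
          intro u hQVu huV hxu
          rcases hV'shape with ⟨hV'T, _⟩ | hV'μ
          · exact ⟨V', Or.inl ⟨hV'T, rfl⟩,
              ⟨hQVu, Or.inl hV'T, dis_mono huV subset_rfl hdis, x, hxu, y, hy, hlt⟩⟩
          · by_cases hyB : y ∈ B1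
            · exact ⟨B1, Or.inr ⟨hV'μ, Or.inl rfl⟩,
                ⟨hQVu, hQV1, dis_mono huV (hV'μ ▸ Finset.subset_union_left) hdis,
                  x, hxu, y, hyB, hlt⟩⟩
            · have hyB2 : y ∈ B2 := (Finset.mem_union.mp (hV'μ ▸ hy)).resolve_left hyB
              exact ⟨B2, Or.inr ⟨hV'μ, Or.inr rfl⟩,
                ⟨hQVu, hQV2, dis_mono huV (hV'μ ▸ Finset.subset_union_right) hdis,
                  x, hxu, y, hyB2, hlt⟩⟩
        rcases hwrep with ⟨hVT, rfl⟩ | ⟨hVμ, hw12⟩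
        · -- exit from a tube of T: w = V
          obtain ⟨w', hrep', hQ⟩ := step w (Or.inl hVT) subset_rfl hx
          rcases hst with hTG | ⟨hTGB2, x2, hx2T, hx2ne, hQ12, hRT⟩
          · exact ⟨w', hrep', Or.inl (hTG.tail hQ)⟩
          · exact ⟨w', hrep', Or.inr ⟨hTGB2, x2, hx2T, hx2ne, hQ12, hRT.tail hQ⟩⟩
        · -- exit from μ
          subst hVμ
          by_cases hxB : x ∈ B1
          · -- exit block B1
            obtain ⟨w', hrep', hQ⟩ := step B1 hQV1 Finset.subset_union_left hxB
            rcases hw12 with hwB | hwB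
            all_goals rw [hwB] at hst
            · -- entry block was B1 too
              rcases hst with hTG | ⟨hTGB2, x2, hx2T, hx2ne, hQ12, hRT⟩
              · exact ⟨w', hrep', Or.inl (hTG.tail hQ)⟩
              · exact ⟨w', hrep', Or.inr ⟨hTGB2, x2, hx2T, hx2ne, hQ12, hRT.tail hQ⟩⟩
            · -- entry B2, exit B1 : the bad pass
              -- V' must be a tube of T, distinct from B2
              have hV'T : V' ∈ C.T ∧ V' ≠ B1 ∪ B2 := by
                rcases hV'shape with h' | h'
                · exact h'
                · exfalso
                  obtain ⟨z, hz⟩ := hμne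
                  exact hdis z hz (h' ▸ hz)
              have hV'ne2 : V' ≠ B2 := by
                rintro rfl
                obtain ⟨z, hz⟩ := C.qv_nonempty hQV2
                exact hdis z (Finset.mem_union_right _ hz) hz
              have hQB1V' : C.Q B1 V' := by
                obtain ⟨w'', hrep'', hQ''⟩ := step B1 hQV1 Finset.subset_union_left hxB
                rcases hrep'' with ⟨_, rfl⟩ | ⟨h', _⟩
                · exact hQ''
                · exact absurd h' hV'T.2
              rcases hst with hTG | ⟨hTGB2, x2, hx2T, hx2ne, hQ12, hRT⟩
              · exact ⟨V', Or.inl ⟨hV'T.1, rfl⟩,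
                  Or.inr ⟨hTG, V', hV'T.1, hV'ne2, hQB1V', Relation.ReflTransGen.refl⟩⟩
              · -- second bad pass: contradiction via emptiness of betweenness
                exfalso
                have hTGx2B2 : Relation.TransGen C.Q x2 B2 := by
                  rcases Relation.reflTransGen_iff_eq_or_transGen.mp hRT with heq | htg
                  · exact absurd heq.symm hx2ne
                  · exact htg
                exact hbtwE x2 (Or.inl hx2T) (Relation.TransGen.single hQ12) hTGx2B2
          · -- exit block B2
            have hxB2 : x ∈ B2 := (Finset.mem_union.mp hx).resolve_left hxB
            obtain ⟨w', hrep', hQ⟩ := step B2 hQV2 Finset.subset_union_right hxB2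
            rcases hw12 with hwB | hwB
            all_goals rw [hwB] at hst
            · -- entry B1, exit B2: insert the direct edge
              rcases hst with hTG | ⟨hTGB2, x2, hx2T, hx2ne, hQ12, hRT⟩
              · exact ⟨w', hrep', Or.inl ((hTG.tail hedge).tail hQ)⟩
              · exact ⟨w', hrep', Or.inr ⟨hTGB2, x2, hx2T, hx2ne, hQ12,
                  (hRT.tail hedge).tail hQ⟩⟩
            · -- entry B2, exit B2
              rcases hst with hTG | ⟨hTGB2, x2, hx2T, hx2ne, hQ12, hRT⟩
              · exact ⟨w', hrep', Or.inl (hTG.tail hQ)⟩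
              · exact ⟨w', hrep', Or.inr ⟨hTGB2, x2, hx2T, hx2ne, hQ12, hRT.tail hQ⟩⟩
  obtain ⟨w, hwrep, hst⟩ := main ρs hcyc Relation.ReflTransGen.refl
  rcases hwrep with ⟨_, rfl⟩ | ⟨hρμ, _⟩
  · rcases hst with hTG | ⟨hTGB2, x2, hx2T, hx2ne, hQ12, hRT⟩
    · exact C.qacyc w hTG
    · have hTGB1 : Relation.TransGen C.Q B1 w := by
        rcases Relation.reflTransGen_iff_eq_or_transGen.mp hRT with heq | htg
        · rw [heq]; exact Relation.TransGen.single hQ12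
        · exact (Relation.TransGen.single hQ12).trans htg
      exact hbtwE w (Or.inl hρT) hTGB1 hTGB2
  · exact hμnT (hρμ ▸ hρT)

end BC

end Ctx

end AffinePoset

namespace AffinePoset

attribute [local instance 10] Classical.propDecidable

namespace Ctx

variable {n : ℕ} (C : Ctx n)

section BC

variable {τ B1 B2 : Finset ℤ} {a1 a2 : ℤ}

lemma text_acyc
    (hτT : τ ∈ C.T) (hτσ : τ ⊆ C.σ) (ha1 : a1 ∈ τ) (hB1 : C.blk τ a1 = B1) (ha2 : a2 ∈ τ)
    (hB2 : C.blk τ a2 = B2) (hne12 : B1 ≠ B2)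
    (hcov : ∃ p q, p ∈ B1 ∧ q ∈ B2 ∧ C.P.covby p q)
    (hbtwE : ∀ X, C.QV X → Relation.TransGen C.Q B1 X → Relation.TransGen C.Q X B2 → False)
    (hμnT : (B1 ∪ B2) ∉ C.T) :
    ∀ ρ ∈ C.Text B1 B2, ¬ Relation.TransGen (C.P.TubingRel (C.Text B1 B2)) ρ ρ := by
  have hQV1 : C.QV B1 := hB1 ▸ C.blk_qv
  have hμσ : B1 ∪ B2 ⊆ C.σ :=
    Finset.union_subset ((hB1 ▸ C.blk_subset ha1).trans hτσ)
      ((hB2 ▸ C.blk_subset ha2).trans hτσ)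
  have hμne : (B1 ∪ B2).Nonempty := by
    obtain ⟨x, hx⟩ := C.qv_nonempty hQV1
    exact ⟨x, Finset.mem_union_left _ hx⟩
  have hμσ0 : B1 ∪ B2 ⊆ sh (n := n) 0 C.σ := by rwa [sh_zero]
  have hshift : ∀ (k : ℤ) (X : Finset ℤ),
      Relation.TransGen (C.P.TubingRel (C.Text B1 B2)) X X →
      Relation.TransGen (C.P.TubingRel (C.Text B1 B2)) (sh (n := n) k X) (sh (n := n) k X) :=
    fun k X h => Relation.TransGen.lift (sh (n := n) k)
      (fun a b hab => C.tubingRel_sh (C.text_closed (B1 := B1) (B2 := B2)) k hab) _ _ h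
  rintro ρ0 (hρT | ⟨k, rfl⟩) hcyc
  · obtain ⟨ρ0', k, hT', hσ', rfl⟩ := C.stepA hρT
    have hc := hshift (-k) _ hcyc
    rw [sh_sh, neg_add_cancel, sh_zero] at hc
    exact C.text_acyc_base hτT hτσ ha1 hB1 ha2 hB2 hne12 hcov hbtwE hμnT hT' hσ' hc
  · have hcycμ := hshift (-k) _ hcyc
    rw [sh_sh, neg_add_cancel, sh_zero] at hcycμ
    obtain ⟨y, e1, hrest⟩ := Relation.TransGen.head'_iff.mp hcycμ
    have hyText : y ∈ C.Text B1 B2 := e1.2.1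
    have hyne : y.Nonempty := by
      rcases hyText with hyT | ⟨k', rfl⟩
      · exact C.tube_nonempty hyT
      · exact sh_nonempty hμne
    obtain ⟨ky, hyk⟩ := C.text_subssh hτσ ha1 hB1 ha2 hB2 y hyText
    have h1 : (0:ℤ) ≤ ky := C.rel_lv_mono e1 hμσ0 hyk
    have h2 : ky ≤ 0 := C.text_rtg_lv hτσ ha1 hB1 ha2 hB2 hyne hrest hyk hμσ0
    have hky : ky = 0 := by omega
    subst hky
    rw [sh_zero] at hyk
    have hyμne : y ≠ B1 ∪ B2 := by
      rintro rfl
      obtain ⟨z, hz⟩ := hμne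
      exact e1.2.2.1 z hz hz
    rcases hyText with hyT | ⟨k', rfl⟩
    · -- base point
      have : Relation.TransGen (C.P.TubingRel (C.Text B1 B2)) y y := by
        rcases Relation.reflTransGen_iff_eq_or_transGen.mp hrest with heq | htg
        · exfalso
          obtain ⟨z, hz⟩ := hμne
          rw [← heq] at e1
          exact e1.2.2.1 z hz hz
        · exact htg.tail e1
      exact C.text_acyc_base hτT hτσ ha1 hB1 ha2 hB2 hne12 hcov hbtwE hμnT hyT hyk this
    · exfalso
      apply hyμne
      have hsub0 : sh (n := n) k' (B1 ∪ B2) ⊆ sh (n := n) 0 C.σ := by rwa [sh_zero]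
      have hk' : k' = 0 := C.text_lv_unique (sh_nonempty hμne)
        ((sh_subset_sh (n := n)).mpr hμσ) hsub0
      rw [hk', sh_zero]

theorem blk_two (hτT : τ ∈ C.T) (hτσ : τ ⊆ C.σ)
    (hnb : ∃ a b, a ∈ τ ∧ b ∈ τ ∧ C.blk τ a ≠ C.blk τ b) :
    ∃ B1 B2 : Finset ℤ, B1 ≠ B2 ∧ (∃ a ∈ τ, C.blk τ a = B1) ∧ (∃ b ∈ τ, C.blk τ b = B2) ∧
      ∀ a ∈ τ, C.blk τ a = B1 ∨ C.blk τ a = B2 := by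
  obtain ⟨B1, B2, ⟨a1, ha1, hB1⟩, ⟨a2, ha2, hB2⟩, hne12, hcov, hbtwE⟩ := C.select hτT hτσ hnb
  refine ⟨B1, B2, hne12, ⟨a1, ha1, hB1⟩, ⟨a2, ha2, hB2⟩, ?_⟩
  by_contra hcon
  push_neg at hcon
  obtain ⟨a0, ha0, hD1, hD2⟩ := hcon
  have hdis12 : Dis B1 B2 := by
    rw [← hB1, ← hB2]
    exact C.blk_disj (by rw [hB1, hB2]; exact hne12)
  obtain ⟨p, q, hp, hq, hpq⟩ := hcov
  have hμτ : B1 ∪ B2 ⊆ τ :=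
    Finset.union_subset (hB1 ▸ C.blk_subset ha1) (hB2 ▸ C.blk_subset ha2)
  have hμnT : (B1 ∪ B2) ∉ C.T := by
    intro hμT
    have ha0μ : a0 ∉ B1 ∪ B2 := by
      intro h
      rcases Finset.mem_union.mp h with h' | h'
      · exact hD1 (by rw [← hB1]; exact C.blk_eq (hB1 ▸ h'))
      · exact hD2 (by rw [← hB2]; exact C.blk_eq (hB2 ▸ h'))
    have hμneτ : B1 ∪ B2 ≠ τ := fun h => ha0μ (h ▸ ha0)
    have hsub : B1 ∪ B2 ⊆ C.blk τ p :=
      C.sub_in_blk hμT hμτ hμneτ (Finset.mem_union_left _ hp)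
    have hblkp : C.blk τ p = B1 := by rw [← hB1]; exact C.blk_eq (hB1 ▸ hp)
    exact hdis12 q (hblkp ▸ hsub (Finset.mem_union_right _ hq)) hq
  have htubing : C.P.IsTubing (C.Text B1 B2) := by
    refine ⟨C.text_tube hτT ha1 hB1 ha2 hB2 hne12 ⟨p, q, hp, hq, hpq⟩ hbtwE, ?_, ?_, ?_⟩
    · intro ρ hρ k
      rw [image_eq_sh]
      exact C.text_closed ρ hρ k
    · exact C.text_tricho hτT hτσ ha1 hB1 ha2 hB2 hne12
    · exact C.text_acyc hτT hτσ ha1 hB1 ha2 hB2 hne12 ⟨p, q, hp, hq, hpq⟩ hbtwE hμnT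
  have hTT : C.T = C.Text B1 B2 := C.hT.2 _ htubing Set.subset_union_left
  have hμmem : (B1 ∪ B2) ∈ C.Text B1 B2 := Or.inr ⟨0, (sh_zero _).symm⟩
  rw [← hTT] at hμmem
  exact hμnT hμmem

end BC

end Ctx

end AffinePoset

namespace AffinePoset

attribute [local instance 10] Classical.propDecidable

namespace Ctx

variable {n : ℕ} (C : Ctx n)

/-- binary decomposition of a tube inside σ -/
lemma dec {τ : Finset ℤ} (hτT : τ ∈ C.T) (hτσ : τ ⊆ C.σ) :
    ∃ B1 B2 : Finset ℤ, τ = B1 ∪ B2 ∧ Dis B1 B2 ∧ B1.Nonempty ∧ B2.Nonempty ∧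
      C.QV B1 ∧ C.QV B2 ∧
      (∀ ρ ∈ C.T, ρ ⊆ τ → ρ ≠ τ → ρ ⊆ B1 ∨ ρ ⊆ B2) ∧
      (B1 ∈ C.T → B1.card < τ.card) ∧ (B2 ∈ C.T → B2.card < τ.card) ∧
      (((B1 ×ˢ B2).filter (fun pq => C.P.covby pq.1 pq.2)).Nonempty ∨
        ((B2 ×ˢ B1).filter (fun pq => C.P.covby pq.1 pq.2)).Nonempty) ∧
      ¬ (((B1 ×ˢ B2).filter (fun pq => C.P.covby pq.1 pq.2)).Nonempty ∧
        ((B2 ×ˢ B1).filter (fun pq => C.P.covby pq.1 pq.2)).Nonempty) := by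
  obtain ⟨B1, B2, hne12, ⟨b1, hb1, hB1⟩, ⟨b2, hb2, hB2⟩, hall⟩ :=
    C.blk_two hτT hτσ (C.blks_nontriv hτT)
  have hQV1 : C.QV B1 := hB1 ▸ C.blk_qv
  have hQV2 : C.QV B2 := hB2 ▸ C.blk_qv
  have hB1τ : B1 ⊆ τ := hB1 ▸ C.blk_subset hb1
  have hB2τ : B2 ⊆ τ := hB2 ▸ C.blk_subset hb2
  have hdis12 : Dis B1 B2 := by
    rw [← hB1, ← hB2]
    exact C.blk_disj (by rw [hB1, hB2]; exact hne12)
  have hunion : τ = B1 ∪ B2 := by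
    apply subset_antisymm
    · intro a ha
      rcases hall a ha with h | h
      · exact Finset.mem_union_left _ (h ▸ C.blk_mem_self)
      · exact Finset.mem_union_right _ (h ▸ C.blk_mem_self)
    · exact Finset.union_subset hB1τ hB2τ
  have hcard1 : B1 ∈ C.T → B1.card < τ.card := fun _ =>
    Finset.card_lt_card (HasSubset.Subset.ssubset_of_ne hB1τ (hB1 ▸ C.blk_ne hτT))
  have hcard2 : B2 ∈ C.T → B2.card < τ.card := fun _ =>
    Finset.card_lt_card (HasSubset.Subset.ssubset_of_ne hB2τ (hB2 ▸ C.blk_ne hτT))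
  have hsubblk : ∀ ρ ∈ C.T, ρ ⊆ τ → ρ ≠ τ → ρ ⊆ B1 ∨ ρ ⊆ B2 := by
    intro ρ hρT hρτ hρne
    obtain ⟨r0, hr0⟩ := C.tube_nonempty hρT
    have := C.sub_in_blk hρT hρτ hρne hr0
    rcases hall r0 (hρτ hr0) with h | h
    · exact Or.inl (h ▸ this)
    · exact Or.inr (h ▸ this)
  -- cross cover edges
  have hcross : ((B1 ×ˢ B2).filter (fun pq => C.P.covby pq.1 pq.2)).Nonempty ∨
      ((B2 ×ˢ B1).filter (fun pq => C.P.covby pq.1 pq.2)).Nonempty := by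
    have hneblk : C.blk τ b1 ≠ C.blk τ b2 := by rw [hB1, hB2]; exact hne12
    obtain ⟨u, v, hu, hv, hcov, hneuv⟩ :=
      C.cross_step hb2 ((C.tubes hτT).1 b1 hb1 b2 hb2) hb1 hneblk
    have humem : u ∈ C.blk τ u := C.blk_mem_self
    have hvmem : v ∈ C.blk τ v := C.blk_mem_self
    rcases hall u hu with hu' | hu' <;> rcases hall v hv with hv' | hv'
    · exact absurd (hu'.trans hv'.symm) hneuv
    · rcases hcov with hc | hc
      · exact Or.inl ⟨(u, v), Finset.mem_filter.mpr
          ⟨Finset.mem_product.mpr ⟨hu' ▸ humem, hv' ▸ hvmem⟩, hc⟩⟩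
      · exact Or.inr ⟨(v, u), Finset.mem_filter.mpr
          ⟨Finset.mem_product.mpr ⟨hv' ▸ hvmem, hu' ▸ humem⟩, hc⟩⟩
    · rcases hcov with hc | hc
      · exact Or.inr ⟨(u, v), Finset.mem_filter.mpr
          ⟨Finset.mem_product.mpr ⟨hu' ▸ humem, hv' ▸ hvmem⟩, hc⟩⟩
      · exact Or.inl ⟨(v, u), Finset.mem_filter.mpr
          ⟨Finset.mem_product.mpr ⟨hv' ▸ hvmem, hu' ▸ humem⟩, hc⟩⟩
    · exact absurd (hu'.trans hv'.symm) hneuv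
  have hnotboth : ¬ (((B1 ×ˢ B2).filter (fun pq => C.P.covby pq.1 pq.2)).Nonempty ∧
      ((B2 ×ˢ B1).filter (fun pq => C.P.covby pq.1 pq.2)).Nonempty) := by
    rintro ⟨⟨⟨p, q⟩, hpq⟩, ⟨⟨p', q'⟩, hpq'⟩⟩
    obtain ⟨hmem, hcov⟩ := Finset.mem_filter.mp hpq
    obtain ⟨hmem', hcov'⟩ := Finset.mem_filter.mp hpq'
    obtain ⟨hp, hq⟩ := Finset.mem_product.mp hmem
    obtain ⟨hp', hq'⟩ := Finset.mem_product.mp hmem'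
    have hQ1 : C.Q B1 B2 := ⟨hQV1, hQV2, hdis12, p, hp, q, hq, hcov.1⟩
    have hQ2 : C.Q B2 B1 := ⟨hQV2, hQV1, hdis12.symm, p', hp', q', hq', hcov'.1⟩
    exact C.qacyc B1 ((Relation.TransGen.single hQ1).tail hQ2)
  exact ⟨B1, B2, hunion, hdis12, C.qv_nonempty hQV1, C.qv_nonempty hQV2, hQV1, hQV2,
    hsubblk, hcard1, hcard2, hcross, hnotboth⟩

lemma sum_ite_const {α : Type*} (s : Finset α) (P : α → Prop) (c : ℝ) :
    (∑ x ∈ s, if P x then c else 0) = ((s.filter P).card : ℝ) * c := by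
  rw [← Finset.sum_filter, Finset.sum_const]
  simp [mul_comm]

/-- a function with vanishing alphas on all subtubes of σ is constant on each of them -/
lemma const_on (y : ℤ → ℝ) (hy : ∀ ρ ∈ C.T, ρ ⊆ C.σ → C.P.alpha ρ y = 0) :
    ∀ N : ℕ, ∀ τ ∈ C.T, τ ⊆ C.σ → τ.card ≤ N → ∀ a ∈ τ, ∀ b ∈ τ, y a = y b := by
  intro N
  induction N with
  | zero =>
      intro τ hτT _ hcard
      have := (C.tubes hτT).2.2.1
      omega
  | succ N ih =>
      intro τ hτT hτσ hcard a ha b hb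
      obtain ⟨B1, B2, hunion, hdis, hne1, hne2, hQV1, hQV2, _, hcard1, hcard2,
        hcross, hnotboth⟩ := C.dec hτT hτσ
      obtain ⟨x1, hx1⟩ := hne1
      obtain ⟨x2, hx2⟩ := hne2
      -- y is constant on each block
      have hconst1 : ∀ x ∈ B1, y x = y x1 := by
        rcases hQV1 with hT | ⟨z, rfl⟩
        · intro x hx
          exact ih B1 hT (fun w hw => hτσ (hunion ▸ Finset.mem_union_left _ hw))
            (by have := hcard1 hT; omega) x hx x1 hx1
        · intro x hx
          simp only [Finset.mem_singleton] at hx hx1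
          rw [hx, hx1]
      have hconst2 : ∀ x ∈ B2, y x = y x2 := by
        rcases hQV2 with hT | ⟨z, rfl⟩
        · intro x hx
          exact ih B2 hT (fun w hw => hτσ (hunion ▸ Finset.mem_union_right _ hw))
            (by have := hcard2 hT; omega) x hx x2 hx2
        · intro x hx
          simp only [Finset.mem_singleton] at hx hx2
          rw [hx, hx2]
      -- compute alpha τ y via the block constants
      set z : ℤ → ℝ := fun i => if i ∈ B1 then y x1 else y x2 with hz
      have hzy : C.P.alpha τ y = C.P.alpha τ z := by
        apply C.P.alpha_congr
        intro i hi
        rw [hz]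
        by_cases hiB : i ∈ B1
        · simp only [hiB, if_true]
          exact hconst1 i hiB
        · simp only [hiB, if_false]
          exact hconst2 i ((Finset.mem_union.mp (hunion ▸ hi)).resolve_left hiB)
      have hdisj : Disjoint B1 B2 := Finset.disjoint_left.mpr (fun hxx h1 h2 => hdis _ h1 h2)
      set c12 := ((B1 ×ˢ B2).filter (fun pq => C.P.covby pq.1 pq.2)).card with hc12
      set c21 := ((B2 ×ˢ B1).filter (fun pq => C.P.covby pq.1 pq.2)).card with hc21
      have hval : C.P.alpha τ z =
          (c12 : ℝ) * (y x2 - y x1) + (c21 : ℝ) * (y x1 - y x2) := by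
        have hzB1 : ∀ i ∈ B1, z i = y x1 := by
          intro i hi; simp only [hz, hi, if_true]
        have hzB2 : ∀ i ∈ B2, z i = y x2 := by
          intro i hi
          have hiB1 : i ∉ B1 := fun h => hdis i h hi
          simp only [hz, hiB1, if_false]
        have e11 : (∑ i ∈ B1, ∑ j ∈ B1, if C.P.covby i j then z j - z i else 0) = 0 := by
          apply Finset.sum_eq_zero; intro i hi
          apply Finset.sum_eq_zero; intro j hj
          rw [hzB1 i hi, hzB1 j hj]
          simp
        have e22 : (∑ i ∈ B2, ∑ j ∈ B2, if C.P.covby i j then z j - z i else 0) = 0 := by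
          apply Finset.sum_eq_zero; intro i hi
          apply Finset.sum_eq_zero; intro j hj
          rw [hzB2 i hi, hzB2 j hj]
          simp
        have e12 : (∑ i ∈ B1, ∑ j ∈ B2, if C.P.covby i j then z j - z i else 0)
            = (c12 : ℝ) * (y x2 - y x1) := by
          have hcongr : ∀ i ∈ B1, (∑ j ∈ B2, if C.P.covby i j then z j - z i else 0)
              = ∑ j ∈ B2, if C.P.covby i j then y x2 - y x1 else 0 := by
            intro i hi
            apply Finset.sum_congr rfl
            intro j hj
            rw [hzB1 i hi, hzB2 j hj]
          rw [Finset.sum_congr rfl hcongr, ← Finset.sum_product']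
          exact sum_ite_const _ _ _
        have e21 : (∑ i ∈ B2, ∑ j ∈ B1, if C.P.covby i j then z j - z i else 0)
            = (c21 : ℝ) * (y x1 - y x2) := by
          have hcongr : ∀ i ∈ B2, (∑ j ∈ B1, if C.P.covby i j then z j - z i else 0)
              = ∑ j ∈ B1, if C.P.covby i j then y x1 - y x2 else 0 := by
            intro i hi
            apply Finset.sum_congr rfl
            intro j hj
            rw [hzB2 i hi, hzB1 j hj]
          rw [Finset.sum_congr rfl hcongr, ← Finset.sum_product']
          exact sum_ite_const _ _ _
        have hsplit : ∀ s : Finset ℤ,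
            (∑ i ∈ s, ∑ j ∈ B1 ∪ B2, if C.P.covby i j then z j - z i else 0) =
            (∑ i ∈ s, ∑ j ∈ B1, if C.P.covby i j then z j - z i else 0) +
            (∑ i ∈ s, ∑ j ∈ B2, if C.P.covby i j then z j - z i else 0) := by
          intro s
          rw [← Finset.sum_add_distrib]
          apply Finset.sum_congr rfl
          intro i _
          rw [Finset.sum_union hdisj]
        unfold alpha
        rw [hunion, Finset.sum_union hdisj, hsplit, hsplit, e11, e12, e21, e22]
        ring
      -- conclude the two block values agree
      have hzero : (c12 : ℝ) * (y x2 - y x1) + (c21 : ℝ) * (y x1 - y x2) = 0 := by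
        rw [← hval, ← hzy]
        exact hy τ hτT hτσ
      have hveq : y x1 = y x2 := by
        rcases hcross with hcr | hcr
        · have hc21e : c21 = 0 := by
            by_contra hne
            exact hnotboth ⟨hcr, Finset.card_pos.mp (Nat.pos_of_ne_zero hne)⟩
          have hc12p : 0 < c12 := Finset.card_pos.mpr hcr
          rw [hc21e] at hzero
          push_cast at hzero
          have : (c12 : ℝ) ≠ 0 := by positivity
          have h2 : (y x2 - y x1) = 0 := by
            rcases mul_eq_zero.mp (by linarith : (c12 : ℝ) * (y x2 - y x1) = 0) with h | h
            · exact absurd h this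
            · exact h
          linarith
        · have hc12e : c12 = 0 := by
            by_contra hne
            exact hnotboth ⟨Finset.card_pos.mp (Nat.pos_of_ne_zero hne), hcr⟩
          have hc21p : 0 < c21 := Finset.card_pos.mpr hcr
          rw [hc12e] at hzero
          push_cast at hzero
          have : (c21 : ℝ) ≠ 0 := by positivity
          have h2 : (y x1 - y x2) = 0 := by
            rcases mul_eq_zero.mp (by linarith : (c21 : ℝ) * (y x1 - y x2) = 0) with h | h
            · exact absurd h this
            · exact h
          linarith
      have hvala : ∀ w ∈ τ, y w = y x1 := by
        intro w hw
        rcases Finset.mem_union.mp (hunion ▸ hw) with h | h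
        · exact hconst1 w h
        · rw [hconst2 w h, hveq]
      rw [hvala a ha, hvala b hb]

end Ctx

end AffinePoset

namespace AffinePoset

attribute [local instance 10] Classical.propDecidable

namespace Ctx

variable {n : ℕ} (C : Ctx n)

/-- the tubes of the tubing inside σ -/
noncomputable def Ssig : Finset (Finset ℤ) := C.σ.powerset.filter (· ∈ C.T)

lemma mem_Ssig {ρ : Finset ℤ} : ρ ∈ C.Ssig ↔ ρ ⊆ C.σ ∧ ρ ∈ C.T := by
  unfold Ssig
  simp only [Finset.mem_filter, Finset.mem_powerset]

lemma count : ∀ N : ℕ, ∀ τ ∈ C.T, τ ⊆ C.σ → τ.card ≤ N →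
    ((C.Ssig).filter (· ⊆ τ)).card = τ.card - 1 := by
  intro N
  induction N with
  | zero =>
      intro τ hτT _ hcard
      have := (C.tubes hτT).2.2.1
      omega
  | succ N ih =>
      intro τ hτT hτσ hcard
      obtain ⟨B1, B2, hunion, hdis, hne1, hne2, hQV1, hQV2, hsubblk, hcard1, hcard2, _, _⟩ :=
        C.dec hτT hτσ
      have hdisj : Disjoint B1 B2 := Finset.disjoint_left.mpr (fun {x} h1 h2 => hdis x h1 h2)
      have hB1τ : B1 ⊆ τ := hunion ▸ Finset.subset_union_left
      have hB2τ : B2 ⊆ τ := hunion ▸ Finset.subset_union_right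
      have hsplit : C.Ssig.filter (· ⊆ τ) =
          insert τ ((C.Ssig.filter (· ⊆ B1)) ∪ (C.Ssig.filter (· ⊆ B2))) := by
        ext ρ
        simp only [Finset.mem_insert, Finset.mem_union, Finset.mem_filter]
        constructor
        · rintro ⟨hρS, hρτ⟩
          by_cases hρeq : ρ = τ
          · exact Or.inl hρeq
          · rcases hsubblk ρ (C.mem_Ssig.mp hρS).2 hρτ hρeq with h | h
            · exact Or.inr (Or.inl ⟨hρS, h⟩)
            · exact Or.inr (Or.inr ⟨hρS, h⟩)
        · rintro (rfl | ⟨hρS, h⟩ | ⟨hρS, h⟩)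
          · exact ⟨C.mem_Ssig.mpr ⟨hτσ, hτT⟩, subset_rfl⟩
          · exact ⟨hρS, h.trans hB1τ⟩
          · exact ⟨hρS, h.trans hB2τ⟩
      have hτnot : τ ∉ (C.Ssig.filter (· ⊆ B1)) ∪ (C.Ssig.filter (· ⊆ B2)) := by
        intro hmem
        rcases Finset.mem_union.mp hmem with h | h
        · obtain ⟨x2, hx2⟩ := hne2
          exact hdis x2 ((Finset.mem_filter.mp h).2 (hB2τ hx2)) hx2
        · obtain ⟨x1, hx1⟩ := hne1
          exact hdis x1 hx1 ((Finset.mem_filter.mp h).2 (hB1τ hx1))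
      have hdisj2 : Disjoint (C.Ssig.filter (· ⊆ B1)) (C.Ssig.filter (· ⊆ B2)) := by
        rw [Finset.disjoint_left]
        intro ρ h1 h2
        obtain ⟨hρS, hρ1⟩ := Finset.mem_filter.mp h1
        have hρ2 := (Finset.mem_filter.mp h2).2
        obtain ⟨r, hr⟩ := C.tube_nonempty (C.mem_Ssig.mp hρS).2
        exact hdis r (hρ1 hr) (hρ2 hr)
      have hcount1 : (C.Ssig.filter (· ⊆ B1)).card = B1.card - 1 := by
        rcases hQV1 with hT | ⟨x, rfl⟩
        · exact ih B1 hT (hB1τ.trans hτσ) (by have := hcard1 hT; omega)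
        · have : C.Ssig.filter (· ⊆ ({x} : Finset ℤ)) = ∅ := by
            rw [Finset.filter_eq_empty_iff]
            intro ρ hρS hρsub
            have h2 := (C.tubes (C.mem_Ssig.mp hρS).2).2.2.1
            have := Finset.card_le_card hρsub
            simp only [Finset.card_singleton] at this
            omega
          rw [this]
          simp
      have hcount2 : (C.Ssig.filter (· ⊆ B2)).card = B2.card - 1 := by
        rcases hQV2 with hT | ⟨x, rfl⟩
        · exact ih B2 hT (hB2τ.trans hτσ) (by have := hcard2 hT; omega)
        · have : C.Ssig.filter (· ⊆ ({x} : Finset ℤ)) = ∅ := by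
            rw [Finset.filter_eq_empty_iff]
            intro ρ hρS hρsub
            have h2 := (C.tubes (C.mem_Ssig.mp hρS).2).2.2.1
            have := Finset.card_le_card hρsub
            simp only [Finset.card_singleton] at this
            omega
          rw [this]
          simp
      have hcards : τ.card = B1.card + B2.card := by
        rw [hunion]
        exact Finset.card_union_of_disjoint hdisj
      have h1pos : 1 ≤ B1.card := Finset.card_pos.mpr hne1
      have h2pos : 1 ≤ B2.card := Finset.card_pos.mpr hne2
      rw [hsplit, Finset.card_insert_of_notMem hτnot, Finset.card_union_of_disjoint hdisj2,
        hcount1, hcount2]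
      omega

lemma ssig_card : C.Ssig.card = n - 1 := by
  have h := C.count C.σ.card C.σ C.hσ subset_rfl le_rfl
  have hfull : C.Ssig.filter (· ⊆ C.σ) = C.Ssig := by
    apply Finset.filter_true_of_mem
    intro ρ hρ
    exact (C.mem_Ssig.mp hρ).1
  rw [hfull] at h
  rw [h, C.hcard]

end Ctx

end AffinePoset

namespace AffinePoset

attribute [local instance 10] Classical.propDecidable

namespace Ctx

variable {n : ℕ} (C : Ctx n)

noncomputable def ext (y : {x // x ∈ C.σ} → ℝ) : ℤ → ℝ :=
  fun i => if h : i ∈ C.σ then y ⟨i, h⟩ else 0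

noncomputable def Lmap : ({x // x ∈ C.σ} → ℝ) →ₗ[ℝ] ({ρ // ρ ∈ C.Ssig} → ℝ) where
  toFun y := fun ρ => C.P.alpha ρ.1 (C.ext y)
  map_add' y z := by
    funext ρ
    show C.P.alpha ρ.1 (C.ext (y + z)) = C.P.alpha ρ.1 (C.ext y) + C.P.alpha ρ.1 (C.ext z)
    have h1 : C.P.alpha ρ.1 (C.ext (y + z)) =
        C.P.alpha ρ.1 (fun i => C.ext y i + C.ext z i) := by
      apply C.P.alpha_congr
      intro i _
      unfold ext
      split_ifs <;> simp
    rw [h1, C.P.alpha_add]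
  map_smul' c y := by
    funext ρ
    show C.P.alpha ρ.1 (C.ext (c • y)) = c * C.P.alpha ρ.1 (C.ext y)
    have h1 : C.P.alpha ρ.1 (C.ext (c • y)) =
        C.P.alpha ρ.1 (fun i => c * C.ext y i) := by
      apply C.P.alpha_congr
      intro i _
      unfold ext
      split_ifs <;> simp
    rw [h1, C.P.alpha_smul]

lemma Lmap_apply (y : {x // x ∈ C.σ} → ℝ) (ρ : {ρ // ρ ∈ C.Ssig}) :
    C.Lmap y ρ = C.P.alpha ρ.1 (C.ext y) := rfl

lemma sigma_nonempty : C.σ.Nonempty := by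
  apply Finset.card_pos.mp
  rw [C.hcard]
  exact C.hn

lemma ker_eq : LinearMap.ker C.Lmap =
    Submodule.span ℝ {(fun _ => (1:ℝ) : {x // x ∈ C.σ} → ℝ)} := by
  apply _root_.le_antisymm
  · intro y hy
    rw [LinearMap.mem_ker] at hy
    have hcst : ∀ ρ ∈ C.T, ρ ⊆ C.σ → C.P.alpha ρ (C.ext y) = 0 := by
      intro ρ hρT hρσ
      have := congrFun hy ⟨ρ, C.mem_Ssig.mpr ⟨hρσ, hρT⟩⟩
      rw [Lmap_apply] at this
      simpa using this
    have hc := C.const_on (C.ext y) hcst C.σ.card C.σ C.hσ subset_rfl le_rfl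
    obtain ⟨s0, hs0⟩ := C.sigma_nonempty
    rw [Submodule.mem_span_singleton]
    refine ⟨y ⟨s0, hs0⟩, ?_⟩
    funext s
    have h2 := hc s.1 s.2 s0 hs0
    unfold ext at h2
    rw [dif_pos s.2, dif_pos hs0] at h2
    simp only [Pi.smul_apply, smul_eq_mul, mul_one]
    rw [← h2]
  · rw [Submodule.span_le]
    intro v hv
    simp only [Set.mem_singleton_iff] at hv
    subst hv
    rw [SetLike.mem_coe, LinearMap.mem_ker]
    funext ρ
    rw [Lmap_apply]
    have h1 : C.P.alpha ρ.1 (C.ext (fun _ => 1)) = C.P.alpha ρ.1 (fun _ => (1:ℝ)) := by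
      apply C.P.alpha_congr
      intro i hi
      have hiσ : i ∈ C.σ := (C.mem_Ssig.mp ρ.2).1 hi
      unfold ext
      rw [dif_pos hiσ]
    rw [h1, C.P.alpha_const]
    rfl

lemma lsurj : Function.Surjective C.Lmap := by
  have h1 : Module.finrank ℝ ({x // x ∈ C.σ} → ℝ) = n := by
    rw [Module.finrank_pi, Fintype.card_coe, C.hcard]
  have hker : Module.finrank ℝ (LinearMap.ker C.Lmap) = 1 := by
    rw [C.ker_eq]
    apply finrank_span_singleton
    intro h
    obtain ⟨s0, hs0⟩ := C.sigma_nonempty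
    have := congrFun h ⟨s0, hs0⟩
    simp at this
  have hrn := LinearMap.finrank_range_add_finrank_ker C.Lmap
  have htarget : Module.finrank ℝ ({ρ // ρ ∈ C.Ssig} → ℝ) = n - 1 := by
    rw [Module.finrank_pi, Fintype.card_coe, C.ssig_card]
  have hrange : Module.finrank ℝ (LinearMap.range C.Lmap) = n - 1 := by
    rw [h1, hker] at hrn
    have hn := C.hn
    omega
  have htop : LinearMap.range C.Lmap = ⊤ :=
    Submodule.eq_top_of_finrank_eq (by rw [hrange, htarget])
  rwa [← LinearMap.range_eq_top]

lemma periodic_const (d : ℤ → ℝ) (hper : ∀ i, d (i + (n:ℤ)) = d i)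
    (hd : ∀ ρ ∈ C.T, ρ ⊆ C.σ → C.P.alpha ρ d = 0) : ∃ c, ∀ i, d i = c := by
  have hcσ := C.const_on d hd C.σ.card C.σ C.hσ subset_rfl le_rfl
  obtain ⟨s0, hs0⟩ := C.sigma_nonempty
  refine ⟨d s0, fun i => ?_⟩
  have hshift : ∀ (k : ℤ) (j : ℤ), d (j + k * n) = d j := by
    intro k j
    have := shift_val (n := n) (x := d) (t := 0) (fun i => by rw [hper]; ring) k j
    simpa using this
  have h2 : d i = d (C.rp i) := by
    conv_lhs => rw [C.rp_lv i]
    exact hshift (C.lv i) (C.rp i)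
  rw [h2]
  exact hcσ (C.rp i) (C.rp_mem i) s0 hs0

lemma exists_point : ∃ x : ℤ → ℝ, C.P.IsAffineMap x ∧
    ∀ τ ∈ C.T, C.P.alpha τ x = (n:ℝ) ^ (2 * τ.card) := by
  set cst : ℝ := (n:ℝ) ^ (2 * (n + 1)) with hcst
  set x₀ : ℤ → ℝ := fun i => -(C.lv i : ℝ) * cst with hx₀
  have hx₀aff : C.P.IsAffineMap x₀ := by
    intro i
    have hlv : C.lv (i + (n:ℤ)) = C.lv i + 1 := by
      have := (C.lv_add i 1).2
      rw [one_mul] at this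
      exact this
    show -(C.lv i : ℝ) * cst = -(C.lv (i + (n:ℤ)) : ℝ) * cst + cst
    rw [hlv]
    push_cast
    ring
  obtain ⟨y, hy⟩ := C.lsurj (fun ρ => (n:ℝ) ^ (2 * ρ.1.card) - C.P.alpha ρ.1 x₀)
  set pxt : ℤ → ℝ := fun i => y ⟨C.rp i, C.rp_mem i⟩ with hpxt
  have hrpshift : ∀ i : ℤ, C.rp (i + (n:ℤ)) = C.rp i := by
    intro i
    have := (C.lv_add i 1).1
    rw [one_mul] at this
    exact this
  have hper : ∀ i, pxt (i + (n:ℤ)) = pxt i := by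
    intro i
    show y ⟨C.rp (i + (n:ℤ)), _⟩ = y ⟨C.rp i, _⟩
    exact congrArg y (Subtype.ext (hrpshift i))
  refine ⟨fun i => x₀ i + pxt i, ?_, ?_⟩
  · intro i
    have h1 := hx₀aff i
    have h2 := hper i
    show x₀ i + pxt i = (x₀ (i + (n:ℤ)) + pxt (i + (n:ℤ))) + cst
    rw [h2]
    linarith
  · have hxaff : C.P.IsAffineMap (fun i => x₀ i + pxt i) := by
      intro i
      have h1 := hx₀aff i
      have h2 := hper i
      show x₀ i + pxt i = (x₀ (i + (n:ℤ)) + pxt (i + (n:ℤ))) + cst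
      rw [h2]
      linarith
    apply C.all_of_sub hxaff
    intro ρ hρT hρσ
    have h1 : C.P.alpha ρ (fun i => x₀ i + pxt i) = C.P.alpha ρ x₀ + C.P.alpha ρ pxt :=
      C.P.alpha_add ρ x₀ pxt
    have h2 : C.P.alpha ρ pxt = C.P.alpha ρ (C.ext y) := by
      apply C.P.alpha_congr
      intro i hi
      have hiσ : i ∈ C.σ := hρσ hi
      show y ⟨C.rp i, _⟩ = C.ext y i
      unfold ext
      rw [dif_pos hiσ]
      exact congrArg y (Subtype.ext (C.rp_of_mem hiσ).1)
    have h3 := congrFun hy ⟨ρ, C.mem_Ssig.mpr ⟨hρσ, hρT⟩⟩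
    rw [Lmap_apply] at h3
    simp only at h3
    rw [h1, h2, h3]
    ring

lemma unique_point {x y' : ℤ → ℝ}
    (hx : C.P.IsAffineMap x ∧ ∀ τ ∈ C.T, C.P.alpha τ x = (n:ℝ) ^ (2 * τ.card))
    (hy : C.P.IsAffineMap y' ∧ ∀ τ ∈ C.T, C.P.alpha τ y' = (n:ℝ) ^ (2 * τ.card)) :
    ∃ c : ℝ, ∀ i, y' i = x i + c := by
  set d : ℤ → ℝ := fun i => y' i - x i with hd
  have hper : ∀ i, d (i + (n:ℤ)) = d i := by
    intro i
    have h1 := C.P.affine_step hx.1 i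
    have h2 := C.P.affine_step hy.1 i
    show y' (i + (n:ℤ)) - x (i + (n:ℤ)) = y' i - x i
    rw [h1, h2]
    ring
  have hd0 : ∀ ρ ∈ C.T, ρ ⊆ C.σ → C.P.alpha ρ d = 0 := by
    intro ρ hρT _
    have := C.P.alpha_sub ρ y' x
    rw [hx.2 ρ hρT, hy.2 ρ hρT] at this
    rw [hd]
    rw [this]
    ring
  obtain ⟨c, hc⟩ := C.periodic_const d hper hd0
  refine ⟨c, fun i => ?_⟩
  have := hc i
  rw [hd] at this
  simp only at this
  linarith

end Ctx

end AffinePoset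


/-- for a maximal `n`-periodic proper tubing `T` of an affine
poset and `σ ∈ T` with `|σ| = n`, the intersection of `H_τ` over `τ ∈ T` with
`τ ⊆ σ` equals the intersection over all `τ ∈ T`, and this intersection is a
single point of `ℝ^{P̃}/𝒞` (i.e. a single affine map up to adding constants). -/
theorem affine_vertex_lemma {n : ℕ} (hn : 0 < n) (P : AffinePoset n)
    (T : Set (Finset ℤ)) (hT : P.IsMaximalTubing T)
    (σ : Finset ℤ) (hσ : σ ∈ T) (hcard : σ.card = n) :
    {x : ℤ → ℝ | P.IsAffineMap x ∧
        ∀ τ ∈ T, τ ⊆ σ → P.alpha τ x = (n : ℝ) ^ (2 * τ.card)} =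
      {x : ℤ → ℝ | P.IsAffineMap x ∧
        ∀ τ ∈ T, P.alpha τ x = (n : ℝ) ^ (2 * τ.card)} ∧
    ∃ x : ℤ → ℝ, (P.IsAffineMap x ∧
        ∀ τ ∈ T, P.alpha τ x = (n : ℝ) ^ (2 * τ.card)) ∧
      ∀ y : ℤ → ℝ, (P.IsAffineMap y ∧
          ∀ τ ∈ T, P.alpha τ y = (n : ℝ) ^ (2 * τ.card)) →
        ∃ c : ℝ, ∀ i, y i = x i + c := by 
  constructor
  · ext x
    simp only [Set.mem_setOf_eq]
    constructor
    · rintro ⟨hxa, hxe⟩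
      exact ⟨hxa, AffinePoset.Ctx.all_of_sub ⟨P, T, σ, hn, hT, hσ, hcard⟩ hxa
        (fun τ hτ hτσ => hxe τ hτ hτσ)⟩
    · rintro ⟨hxa, hxe⟩
      exact ⟨hxa, fun τ hτ _ => hxe τ hτ⟩
  · obtain ⟨x, hx1, hx2⟩ :=
      AffinePoset.Ctx.exists_point (⟨P, T, σ, hn, hT, hσ, hcard⟩ : AffinePoset.Ctx n)
    refine ⟨x, ⟨hx1, hx2⟩, ?_⟩
    rintro y ⟨hya, hye⟩
    exact AffinePoset.Ctx.unique_point (⟨P, T, σ, hn, hT, hσ, hcard⟩ : AffinePoset.Ctx n)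
      ⟨hx1, hx2⟩ ⟨hya, hye⟩
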